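/- arXiv:2511.01809 — 6 statements merged into one kernel-verified Lean document; each statement's English description precedes it below -/
import Mathlib

section
/- Let p and q be distinct primes with q dividing p−1, and let r be an integer with r ≢ 1 (mod p) and r^q ≡ 1 (mod p). Consider the group G = ⟨a, b ∣ a^p = b^{q²} = 1, a^b = a^r⟩. Then the center of G equals ⟨b^q⟩, and G/Z(G) is isomorphic to the nonabelian group C_p ⋊ C_q of order pq, but G has no subgroup isomorphic to this nonabelian group of order pq. -/
open Subgroup


/-- For `G = ⟨a, b ∣ a^p = b^{q²} = 1, a^b = a^r⟩` with `r` of multiplicative order `q`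
modulo `p`: the center of `G` is `⟨b^q⟩`, `G/Z(G)` is the nonabelian group of order `pq`,
but `G` has no nonabelian subgroup of order `pq`. -/
theorem stmt3 (p q r : ℕ) (hp : p.Prime) (hq : q.Prime) (hpq : p ≠ q) (hqp : q ∣ p - 1)
    (hr1 : (r : ZMod p) ≠ 1) (hrq : (r : ZMod p) ^ q = 1)
    (G : Type*) [Group G] [Finite G] (a b : G)
    (ha : orderOf a = p) (hb : orderOf b = q ^ 2)
    (hab : b⁻¹ * a * b = a ^ r)
    (hgen : Subgroup.closure {a, b} = ⊤)
    (hcard : Nat.card G = p * q ^ 2) :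
    Subgroup.center G = Subgroup.zpowers (b ^ q) ∧
    Nat.card (G ⧸ Subgroup.center G) = p * q ∧
    (¬ ∀ x y : G ⧸ Subgroup.center G, Commute x y) ∧
    ∀ H : Subgroup G, Nat.card H = p * q → ∀ x y : H, Commute x y := by
  haveI : Fact p.Prime := ⟨hp⟩
  have hp0 : p ≠ 0 := hp.ne_zero
  have hq0 : q ≠ 0 := hq.ne_zero
  -- basic exponent arithmetic for a
  have hapow : ∀ m n : ℕ, a ^ m = a ^ n ↔ (m : ZMod p) = (n : ZMod p) := by
    intro m n
    rw [pow_eq_pow_iff_modEq, ha, ← ZMod.natCast_eq_natCast_iff]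
  -- r is nonzero mod p
  have hr0 : (r : ZMod p) ≠ 0 := by
    intro h
    rw [h, zero_pow hq0] at hrq
    exact zero_ne_one hrq
  have hr_pos : 1 ≤ r := by
    rcases Nat.eq_zero_or_pos r with h | h
    · exfalso; apply hr0; rw [h]; simp
    · exact h
  -- order of r mod p is q
  have hordr : orderOf (r : ZMod p) = q := by
    have h1 : orderOf (r : ZMod p) ∣ q := orderOf_dvd_of_pow_eq_one hrq
    rcases (Nat.Prime.eq_one_or_self_of_dvd hq _ h1) with h | h
    · exact absurd (orderOf_eq_one_iff.mp h) hr1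
    · exact h
  -- conjugation formulas
  have hconj1 : ∀ m : ℕ, b⁻¹ * a ^ m * b = a ^ (r * m) := by
    intro m
    have h := conj_pow (i := m) (a := b⁻¹) (b := a)
    rw [inv_inv] at h
    rw [← h, hab, ← pow_mul]
  have hconj : ∀ j k : ℕ, (b ^ j)⁻¹ * a ^ k * b ^ j = a ^ (r ^ j * k) := by
    intro j
    induction j with
    | zero => intro k; simp
    | succ j ih =>
      intro k
      have h1 : (b ^ (j+1))⁻¹ * a ^ k * b ^ (j+1)
          = b⁻¹ * ((b ^ j)⁻¹ * a ^ k * b ^ j) * b := by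
        rw [pow_succ]; group
      rw [h1, ih k, hconj1]
      congr 1
      ring
  -- b^(q^2) = 1 and b⁻¹ as a positive power
  have hbq2 : b ^ (q ^ 2) = 1 := by rw [← hb]; exact pow_orderOf_eq_one b
  have hq2pos : 1 ≤ q ^ 2 := Nat.one_le_iff_ne_zero.mpr (pow_ne_zero 2 hq0)
  have hbinv : b⁻¹ = b ^ (q ^ 2 - 1) := by
    rw [inv_eq_iff_mul_eq_one, ← pow_succ', Nat.sub_add_cancel hq2pos, hbq2]
  -- A = ⟨a⟩ is normal
  set A : Subgroup G := zpowers a with hA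
  have hcardA : Nat.card A = p := by rw [hA, Nat.card_zpowers, ha]
  have hmemA : ∀ g : G, g ∈ A ↔ ∃ k : ℕ, a ^ k = g := by
    intro g
    rw [hA, ← mem_powers_iff_mem_zpowers, Submonoid.mem_powers_iff]
  have hbnorm : ∀ j : ℕ, ∀ g ∈ A, (b ^ j)⁻¹ * g * b ^ j ∈ A := by
    intro j g hg
    obtain ⟨k, rfl⟩ := (hmemA g).mp hg
    rw [hconj]
    exact (hmemA _).mpr ⟨_, rfl⟩
  have hAnormal : A.Normal := by
    rw [← Subgroup.normalizer_eq_top_iff, ← top_le_iff, ← hgen, Subgroup.closure_le]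
    intro x hx
    rcases hx with h | h
    · rw [SetLike.mem_coe, h]
      exact Subgroup.le_normalizer ((hmemA a).mpr ⟨1, pow_one a⟩)
    · simp only [Set.mem_singleton_iff] at h
      rw [SetLike.mem_coe, h, Subgroup.mem_normalizer_iff]
      intro g
      constructor
      · intro hg
        have := hbnorm (q ^ 2 - 1) g hg
        rwa [← hbinv, inv_inv] at this
      · intro hg
        have := hbnorm 1 _ hg
        simpa [mul_assoc] using this
  -- decomposition of elements
  have hdecomp : ∀ g : G, ∃ i j : ℕ, g = a ^ i * b ^ j := by
    intro g
    have hsup : A ⊔ zpowers b = ⊤ := by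
      rw [hA, zpowers_eq_closure, zpowers_eq_closure, ← Subgroup.closure_union,
        Set.singleton_union, ← hgen]
    have hg : g ∈ ((A ⊔ zpowers b : Subgroup G) : Set G) := by
      rw [hsup]; trivial
    rw [Subgroup.normal_mul] at hg
    obtain ⟨x, hx, y, hy, rfl⟩ := hg
    obtain ⟨i, rfl⟩ := (hmemA x).mp hx
    obtain ⟨j, rfl⟩ := Submonoid.mem_powers_iff _ _ |>.mp
      (mem_powers_iff_mem_zpowers.mpr hy)
    exact ⟨i, j, rfl⟩
  -- b^q is central
  have hbqa : (b ^ q)⁻¹ * a * (b ^ q) = a := by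
    have h := hconj q 1
    rw [pow_one, mul_one] at h
    have h2 : a ^ (r ^ q) = a ^ 1 := by
      rw [hapow]; push_cast; rw [hrq]
    rw [h, h2, pow_one]
  have hbq_center : b ^ q ∈ center G := by
    rw [Subgroup.mem_center_iff]
    intro g
    have hg : g ∈ Subgroup.closure {a, b} := by rw [hgen]; trivial
    induction hg using Subgroup.closure_induction with
    | mem x hx =>
      rcases hx with h | h
      · rw [h]
        calc a * b ^ q = b ^ q * ((b ^ q)⁻¹ * a * b ^ q) := by group
        _ = b ^ q * a := by rw [hbqa]
      · simp only [Set.mem_singleton_iff] at h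
        rw [h, ← pow_succ, ← pow_succ']
    | one => simp
    | mul x y _ _ hx hy => rw [mul_assoc, hy, ← mul_assoc, hx, mul_assoc]
    | inv x _ hx =>
      calc x⁻¹ * b ^ q = x⁻¹ * (b ^ q) * x * x⁻¹ := by group
      _ = x⁻¹ * (x * b ^ q) * x⁻¹ := by rw [mul_assoc x⁻¹ (b^q) x, ← hx]
      _ = b ^ q * x⁻¹ := by group
  -- the center is exactly ⟨b^q⟩
  have hZ : center G = zpowers (b ^ q) := by
    apply le_antisymm
    · intro g hg
      obtain ⟨i, j, rfl⟩ := hdecomp g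
      rw [Subgroup.mem_center_iff] at hg
      -- commuting with b kills the a-part
      have h1 : a ^ (r * i) * b ^ j = a ^ i * b ^ j := by
        have hgb := hg b
        have : b⁻¹ * (a ^ i * b ^ j) * b = a ^ i * b ^ j := by
          rw [mul_assoc, ← hgb]; group
        calc a ^ (r * i) * b ^ j = b⁻¹ * a ^ i * b * b ^ j := by rw [hconj1]
        _ = b⁻¹ * (a ^ i * b ^ j) * b := by group
        _ = a ^ i * b ^ j := this
      have h2 : a ^ (r * i) = a ^ i := mul_right_cancel h1
      have h3 : (i : ZMod p) = 0 := by
        rw [hapow] at h2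
        push_cast at h2
        have : ((r : ZMod p) - 1) * i = 0 := by ring_nf; rw [h2]; ring
        rcases mul_eq_zero.mp this with h | h
        · exact absurd (by linear_combination h) hr1
        · exact h
      have h4 : a ^ i = 1 := by
        rw [← pow_zero a, hapow]; push_cast; exact h3
      rw [h4, one_mul]
      -- commuting with a forces q ∣ j
      have h5 : (b ^ j)⁻¹ * a * b ^ j = a := by
        have hga := hg a
        rw [h4, one_mul] at hga
        rw [mul_assoc, hga]; group
      have h6 : (r : ZMod p) ^ j = 1 := by
        have hc := hconj j 1
        rw [pow_one, mul_one, h5] at hc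
        have h6' := (hapow 1 (r ^ j)).mp (by rw [pow_one]; exact hc)
        push_cast at h6'
        exact h6'.symm
      have h7 : q ∣ j := by
        rw [← hordr]
        exact orderOf_dvd_of_pow_eq_one h6
      obtain ⟨m, rfl⟩ := h7
      rw [pow_mul]
      exact ⟨m, by simp⟩
    · intro g hg
      obtain ⟨k, rfl⟩ := (Submonoid.mem_powers_iff _ _).mp (mem_powers_iff_mem_zpowers.mpr hg)
      exact pow_mem hbq_center k
  -- order / cardinality facts about the center
  have hobq : orderOf (b ^ q) = q := by
    rw [orderOf_pow, hb, Nat.gcd_eq_right (dvd_pow_self q two_ne_zero)]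
    rw [pow_two, Nat.mul_div_cancel_left _ hq.pos]
  have hcardZ : Nat.card (center G) = q := by rw [hZ, Nat.card_zpowers, hobq]
  have hindexZ : (center G).index = p * q := by
    have h := Subgroup.index_mul_card (center G)
    rw [hcardZ, hcard] at h
    have : (center G).index * q = (p * q) * q := by rw [h]; ring
    exact mul_right_cancel₀ hq0 this
  have hcardQZ : Nat.card (G ⧸ center G) = p * q := by
    rw [← Subgroup.index_eq_card, hindexZ]
  -- elements of the center have order dividing q
  have hZq : ∀ g ∈ center G, g ^ q = 1 := by
    intro g hg
    rw [hZ] at hg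
    obtain ⟨k, rfl⟩ := (Submonoid.mem_powers_iff _ _).mp (mem_powers_iff_mem_zpowers.mpr hg)
    calc ((b ^ q) ^ k) ^ q = b ^ (q * (k * q)) := by rw [← pow_mul, ← pow_mul]
    _ = b ^ (q ^ 2 * k) := by congr 1; ring
    _ = (b ^ (q ^ 2)) ^ k := by rw [pow_mul]
    _ = 1 := by rw [hbq2, one_pow]
  have hqZp : ((q : ZMod p)) ≠ 0 := by
    intro h
    rw [ZMod.natCast_eq_zero_iff] at h
    exact hpq ((Nat.prime_dvd_prime_iff_eq hp hq).mp h)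
  refine ⟨hZ, hcardQZ, ?_, ?_⟩
  · -- the quotient is nonabelian
    intro hcomm
    have h := (hcomm ((b : G) : G ⧸ center G) ((a : G) : G ⧸ center G)).eq
    rw [← QuotientGroup.mk_mul, ← QuotientGroup.mk_mul, QuotientGroup.eq] at h
    have hw : (b * a)⁻¹ * (a * b) = a ^ (r - 1) := by
      have h1 : (b * a)⁻¹ * (a * b) = a⁻¹ * (b⁻¹ * a * b) := by group
      have h2 : a ^ r = a * a ^ (r - 1) := by
        rw [← pow_succ', Nat.sub_add_cancel hr_pos]
      rw [h1, hab, h2]; group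
    rw [hw] at h
    have h2 : a ^ ((r - 1) * q) = 1 := by rw [pow_mul]; exact hZq _ h
    rw [← pow_zero a, hapow] at h2
    push_cast [Nat.cast_sub hr_pos] at h2
    rcases mul_eq_zero.mp h2 with h3 | h3
    · exact hr1 (by linear_combination h3)
    · exact hqZp h3
  · -- no nonabelian subgroup of order pq
    intro H hcardH x y
    haveI := hAnormal
    -- the quotient by A is cyclic of order q², generated by the image of b
    set π := QuotientGroup.mk' A with hπ
    have hindexA : A.index = q ^ 2 := by
      have h := Subgroup.index_mul_card A
      rw [hcardA, hcard] at h
      have : A.index * p = q ^ 2 * p := by rw [h]; ring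
      exact mul_right_cancel₀ hp0 this
    have hcardGA : Nat.card (G ⧸ A) = q ^ 2 := by
      rw [← Subgroup.index_eq_card, hindexA]
    have hπa : π a = 1 := by
      rw [hπ, QuotientGroup.mk'_apply, QuotientGroup.eq_one_iff]
      exact (hmemA a).mpr ⟨1, pow_one a⟩
    have htop : zpowers (π b) = ⊤ := by
      have h1 : Subgroup.map π ⊤ = ⊤ :=
        Subgroup.map_top_of_surjective π (QuotientGroup.mk'_surjective A)
      rw [← hgen, MonoidHom.map_closure] at h1
      have h2 : π '' {a, b} = {1, π b} := by
        rw [Set.image_pair, hπa]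
      rw [h2] at h1
      rw [zpowers_eq_closure, ← h1]
      have : ({1, π b} : Set (G ⧸ A)) = {1} ∪ {π b} := by rw [Set.singleton_union]
      rw [this, Subgroup.closure_union, Subgroup.closure_singleton_one, bot_sup_eq]
    have hoπb : orderOf (π b) = q ^ 2 := by
      rw [orderOf_eq_card_of_forall_mem_zpowers (fun x => by rw [htop]; trivial), hcardGA]
    -- every element of H lies in ⟨a⟩ * ⟨b^q⟩
    have hmemH : ∀ z : H, ∃ i m : ℕ, (z : G) = a ^ i * (b ^ q) ^ m := by
      intro z
      obtain ⟨i, j, hz⟩ := hdecomp (z : G)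
      have hdvd : q ∣ j := by
        by_contra hndvd
        have hcop : Nat.Coprime (q ^ 2) j := (hq.coprime_iff_not_dvd.mpr hndvd).pow_left 2
        have ho : orderOf (π b ^ j) = q ^ 2 := by
          rw [orderOf_pow, hoπb, Nat.Coprime.gcd_eq_one hcop, Nat.div_one]
        have hdvd1 : orderOf (π (z : G)) ∣ p * q := by
          calc orderOf (π (z : G)) ∣ orderOf (z : G) := orderOf_map_dvd π _
          _ = orderOf z := Subgroup.orderOf_coe z
          _ ∣ Nat.card H := orderOf_dvd_natCard z
          _ = p * q := by rw [hcardH]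
        rw [hz, map_mul, map_pow, map_pow, hπa, one_pow, one_mul, ho] at hdvd1
        have : q ∣ p := by
          have h1 : q * q ∣ p * q := by rwa [← pow_two]
          exact (Nat.mul_dvd_mul_iff_right hq.pos).mp h1
        exact hpq ((Nat.prime_dvd_prime_iff_eq hq hp).mp this).symm
      obtain ⟨m, rfl⟩ := hdvd
      exact ⟨i, m, by rw [hz, pow_mul]⟩
    -- conclude commutativity
    obtain ⟨i, m, hx⟩ := hmemH x
    obtain ⟨i', m', hy⟩ := hmemH y
    have hcz : ∀ g : G, Commute g (b ^ q) :=
      fun g => Subgroup.mem_center_iff.mp hbq_center g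
    have hcG : Commute (x : G) (y : G) := by
      rw [hx, hy]
      have c1 : Commute (a ^ i) (a ^ i' * (b ^ q) ^ m') :=
        ((Commute.refl a).pow_pow i i').mul_right ((hcz (a ^ i)).pow_right m')
      have c2 : Commute ((b ^ q) ^ m) (a ^ i' * (b ^ q) ^ m') :=
        (((hcz (a ^ i')).symm.pow_left m).mul_right (((Commute.refl (b ^ q)).pow_pow m m')))
      exact c1.mul_left c2
    exact Subtype.ext (by simpa using hcG.eq)
end

section
/- Let G be a finite group in which every minimal normal subgroup is nonabelian, let p and q be distinct primes dividing |G|, and suppose G has no element of order pq. If M = S₁ × ⋯ × S_t is a minimal normal subgroup of G with the S_i isomorphic nonabelian simple groups, and pq divides |M|, then t = 1 (i.e., M is simple). -/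
/-- If every minimal normal subgroup of `G` is nonabelian, `G` has no element of
order `pq`, and `M ≅ S^t` is a minimal normal subgroup of `G` which is a direct product
of `t` copies of a nonabelian simple group `S` with `pq ∣ |M|`, then `t = 1`. -/
theorem stmt4 (p q : ℕ) (hp : p.Prime) (hq : q.Prime) (hpq : p ≠ q)
    (G : Type*) [Group G] [Finite G]
    (hminnonab : ∀ N : Subgroup G, N.Normal → N ≠ ⊥ →
      (∀ N' : Subgroup G, N'.Normal → N' ≤ N → N' = ⊥ ∨ N' = N) →
      ¬ ∀ x y : N, Commute x y)
    (hnopq : ∀ g : G, orderOf g ≠ p * q)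
    (M : Subgroup G) [M.Normal] (hMbot : M ≠ ⊥)
    (hMmin : ∀ N : Subgroup G, N.Normal → N ≤ M → N = ⊥ ∨ N = M)
    (t : ℕ) (ht : 0 < t)
    (S : Type*) [Group S] [Finite S] [IsSimpleGroup S]
    (hSnonab : ¬ ∀ x y : S, Commute x y)
    (e : M ≃* (Fin t → S))
    (hdvd : p * q ∣ Nat.card M) :
    t = 1 := by
  by_contra hne
  have ht2 : 2 ≤ t := by omega
  have := Fintype.ofFinite S
  -- card M = (card S)^t
  have hcard : Nat.card M = (Nat.card S) ^ t := by
    rw [Nat.card_congr e.toEquiv, Nat.card_pi, Finset.prod_const, Finset.card_univ,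
      Fintype.card_fin]
  have hpS : p ∣ Fintype.card S := by
    rw [← Nat.card_eq_fintype_card]
    exact hp.dvd_of_dvd_pow (hcard ▸ (dvd_mul_right p q).trans hdvd)
  have hqS : q ∣ Fintype.card S := by
    rw [← Nat.card_eq_fintype_card]
    exact hq.dvd_of_dvd_pow (hcard ▸ (dvd_mul_left q p).trans hdvd)
  have : Fact p.Prime := ⟨hp⟩
  have : Fact q.Prime := ⟨hq⟩
  obtain ⟨a, ha⟩ := exists_prime_orderOf_dvd_card p hpS
  obtain ⟨b, hb⟩ := exists_prime_orderOf_dvd_card q hqS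
  set i0 : Fin t := ⟨0, by omega⟩
  set i1 : Fin t := ⟨1, by omega⟩
  have hi : i0 ≠ i1 := by simp [i0, i1, Fin.ext_iff]
  set x : Fin t → S := Pi.mulSingle i0 a
  set y : Fin t → S := Pi.mulSingle i1 b
  have hcomm : Commute x y :=
    Pi.mulSingle_commute (f := fun _ : Fin t => S) hi a b
  have hox : orderOf x = p := by
    rw [← ha]
    exact orderOf_injective (MonoidHom.mulSingle (fun _ : Fin t => S) i0) (Pi.mulSingle_injective (M := fun _ : Fin t => S) i0) a
  have hoy : orderOf y = q := by
    rw [← hb]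
    exact orderOf_injective (MonoidHom.mulSingle (fun _ : Fin t => S) i1) (Pi.mulSingle_injective (M := fun _ : Fin t => S) i1) b
  have hoxy : orderOf (x * y) = p * q := by
    rw [hcomm.orderOf_mul_eq_mul_orderOf_of_coprime (by
      rw [hox, hoy]; exact (Nat.coprime_primes hp hq).mpr hpq), hox, hoy]
  have hm : orderOf (e.symm (x * y)) = p * q := by
    rw [← hoxy]
    exact orderOf_injective e.symm.toMonoidHom e.symm.injective _
  exact hnopq ((e.symm (x * y) : M) : G)
    (by rw [Subgroup.orderOf_coe, hm])
end

section
/- Let G be a finite group, M = S₁ × ⋯ × S_t a minimal normal subgroup of G with the S_i nonabelian simple, let K = ⋂_{i=1}^t N_G(S_i), and let p, q be distinct primes with p dividing each |S_i| and q not dividing |K|. If y ∈ G has order q, then either G has an element of order pq, or the image of y in G/K (viewed as a permutation of {S₁, …, S_t}) has a cycle of length q, and in the latter case, choosing x₁ ∈ S₁ of order p (after renumbering so the cycle is (S₁, …, S_q)) and setting x = x₁·x₁^y·⋯·x₁^{y^{q−1}}, the element xy has order pq; in particular, G always has an element of order pq in this situation when q divides |G/K|. -/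
private lemma list_prod_pow_of_commute {G : Type*} [Monoid G] :
    ∀ (l : List G), (∀ a ∈ l, ∀ b ∈ l, Commute a b) → ∀ n : ℕ,
      l.prod ^ n = (l.map (· ^ n)).prod
  | [], _, n => by simp
  | a :: l, h, n => by
    have hal : Commute a l.prod :=
      Commute.list_prod_right _ _ fun b hb => h a (.head _) b (.tail _ hb)
    rw [List.prod_cons, List.map_cons, List.prod_cons, hal.mul_pow,
      list_prod_pow_of_commute l (fun u hu v hv => h u (.tail _ hu) v (.tail _ hv)) n]

/-- Let `M = S₁ × ⋯ × S_t` be a minimal normal subgroup of `G`, with the `Sᵢ`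
nonabelian simple subgroups permuted by conjugation, `K = ⋂ N_G(Sᵢ)`, `p ∣ |Sᵢ|`
for all `i` and `q ∤ |K|`. If `q ∣ |G|` then `G` has an element of order `pq`. -/
theorem stmt5 (p q : ℕ) (hp : p.Prime) (hq : q.Prime) (hpq : p ≠ q)
    (G : Type*) [Group G] [Finite G]
    (t : ℕ) (ht : 0 < t) (S : Fin t → Subgroup G)
    (hsimple : ∀ i, IsSimpleGroup (S i))
    (hnonab : ∀ i, ¬ ∀ x y : (S i), Commute x y)
    (hcomm : ∀ i j, i ≠ j → ∀ x ∈ S i, ∀ y ∈ S j, Commute x y)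
    (hind : iSupIndep S)
    (hnormalM : (⨆ i, S i).Normal)
    (hMmin : ∀ N : Subgroup G, N.Normal → N ≤ ⨆ i, S i → N = ⊥ ∨ N = ⨆ i, S i)
    (hconj : ∀ (g : G) (i : Fin t), ∃ j, (S i).map (MulAut.conj g).toMonoidHom = S j)
    (hpdvd : ∀ i, p ∣ Nat.card (S i))
    (hK : ¬ q ∣ Nat.card (⨅ i, Subgroup.normalizer (S i : Set G) : Subgroup G))
    (hqG : q ∣ Nat.card G) :
    ∃ g : G, orderOf g = p * q := by
  haveI : Fact p.Prime := ⟨hp⟩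
  haveI : Fact q.Prime := ⟨hq⟩
  -- an element of order q
  obtain ⟨y, hy⟩ := exists_prime_orderOf_dvd_card' (G := G) q hqG
  -- y is not in K
  have hyK : y ∉ (⨅ i, Subgroup.normalizer (S i : Set G) : Subgroup G) := fun h =>
    hK (hy ▸ Subgroup.orderOf_dvd_natCard _ h)
  obtain ⟨i₀, hi₀⟩ : ∃ i, y ∉ Subgroup.normalizer (S i : Set G) := by
    by_contra h
    push_neg at h
    exact hyK (Subgroup.mem_iInf.mpr h)
  -- S is injective
  have hSne : ∀ i, S i ≠ ⊥ := by
    intro i hbot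
    have h1 := hpdvd i
    rw [hbot, Subgroup.card_bot, Nat.dvd_one] at h1
    exact hp.one_lt.ne' h1
  have Sinj : Function.Injective S := by
    intro a b hab
    by_contra hne
    have hle : S a ≤ ⨆ j, ⨆ _ : j ≠ a, S j :=
      hab ▸ le_iSup_of_le b (le_iSup (fun _ : b ≠ a => S b) (Ne.symm hne))
    exact hSne a ((hind a).eq_bot_of_le hle)
  -- conjugation by an element with `map conj = self` normalizes
  have hnorm_of_map : ∀ (g : G) (i : Fin t),
      (S i).map (MulAut.conj g).toMonoidHom = S i → g ∈ Subgroup.normalizer (S i : Set G) := by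
    intro g i hmap
    rw [Subgroup.mem_normalizer_iff]
    intro h
    constructor
    · intro hh
      rw [← hmap]
      exact ⟨h, hh, rfl⟩
    · intro hh
      rw [← hmap] at hh
      obtain ⟨h', hh', heq⟩ := hh
      simp only [MulEquiv.coe_toMonoidHom, MulAut.conj_apply] at heq
      have : h' = h := by
        have := mul_right_cancel heq
        exact mul_left_cancel this
      exact this ▸ hh'
  -- powers of y normalizing S i₀ are trivial
  have hqdvd : ∀ m : ℕ, y ^ m ∈ Subgroup.normalizer (S i₀ : Set G) → q ∣ m := by
    intro m hm
    by_contra hndvd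
    have hcop : Nat.gcd q m = 1 := (hq.coprime_iff_not_dvd.mpr hndvd)
    have hb0 := Nat.gcd_eq_gcd_ab q m
    rw [hcop] at hb0
    have hb : (1 : ℤ) = q * q.gcdA m + m * q.gcdB m := by exact_mod_cast hb0
    have hyq : y ^ (q : ℤ) = 1 := by
      rw [zpow_natCast, ← hy, pow_orderOf_eq_one]
    have hkey : y = (y ^ (m : ℤ)) ^ Nat.gcdB q m := by
      calc y = y ^ (1 : ℤ) := (zpow_one y).symm
        _ = y ^ ((q : ℤ) * Nat.gcdA q m + (m : ℤ) * Nat.gcdB q m) := by rw [← hb]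
        _ = (y ^ (q : ℤ)) ^ Nat.gcdA q m * (y ^ (m : ℤ)) ^ Nat.gcdB q m := by
            rw [zpow_add, zpow_mul, zpow_mul]
        _ = (y ^ (m : ℤ)) ^ Nat.gcdB q m := by rw [hyq]; simp
    refine hi₀ ?_
    rw [hkey]
    exact Subgroup.zpow_mem _ (by rw [zpow_natCast]; exact hm) _
  -- the orbit function
  choose fk hfk2 using fun k : ℕ => hconj (y ^ k) i₀
  have hfk0 : fk 0 = i₀ := by
    apply Sinj
    rw [← hfk2 0]
    ext z
    simp [MulAut.conj_apply]
  have hcompmap : ∀ (u v : G),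
      (S i₀).map (MulAut.conj (u * v)).toMonoidHom
        = ((S i₀).map (MulAut.conj v).toMonoidHom).map (MulAut.conj u).toMonoidHom := by
    intro u v
    rw [Subgroup.map_map]
    congr 1
    ext z
    simp [MulAut.conj_apply, mul_assoc]
  have hmono : ∀ a b : ℕ, b ≤ a → a < q → b < q → fk a = fk b → a = b := by
    intro a b hba ha hb hfab
    have h1 : (S i₀).map (MulAut.conj (y ^ a)).toMonoidHom
        = (S i₀).map (MulAut.conj (y ^ b)).toMonoidHom := by
      rw [hfk2, hfk2, hfab]
    have h2 : y ^ a = y ^ b * y ^ (a - b) := by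
      rw [← pow_add, Nat.add_sub_cancel' hba]
    rw [h2, hcompmap] at h1
    have h3 : (S i₀).map (MulAut.conj (y ^ (a - b))).toMonoidHom = S i₀ :=
      Subgroup.map_injective (MulAut.conj (y ^ b)).injective h1
    have h4 := hqdvd (a - b) (hnorm_of_map _ _ h3)
    have h5 : a - b = 0 := Nat.eq_zero_of_dvd_of_lt h4 (lt_of_le_of_lt (Nat.sub_le a b) ha) |>.symm ▸ rfl
    omega
  have hfkinj : ∀ a b, a < q → b < q → fk a = fk b → a = b := by
    intro a b ha hb h
    rcases le_total b a with hba | hab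
    · exact hmono a b hba ha hb h
    · exact (hmono b a hab hb ha h.symm).symm
  -- element of order p in S i₀
  obtain ⟨u, hu⟩ := exists_prime_orderOf_dvd_card' (G := S i₀) p (hpdvd i₀)
  set x₁ : G := (u : G) with hx₁def
  have hx₁mem : x₁ ∈ S i₀ := u.2
  have hx₁ord : orderOf x₁ = p := by
    rw [← hu]
    exact orderOf_injective (S i₀).subtype (S i₀).subtype_injective u
  have hx₁p : x₁ ^ p = 1 := by rw [← hx₁ord]; exact pow_orderOf_eq_one x₁
  have hx₁ne : x₁ ≠ 1 := by
    intro h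
    rw [h, orderOf_one] at hx₁ord
    exact hp.one_lt.ne' hx₁ord.symm
  -- the conjugates
  set xk : ℕ → G := fun k => (MulAut.conj (y ^ k)) x₁ with hxkdef
  have hxkmem : ∀ k, xk k ∈ S (fk k) := fun k => by
    rw [← hfk2 k]
    exact Subgroup.mem_map.mpr ⟨x₁, hx₁mem, rfl⟩
  have hxk0 : xk 0 = x₁ := by simp [hxkdef]
  have hxkq : xk q = x₁ := by
    have : y ^ q = 1 := by rw [← hy]; exact pow_orderOf_eq_one y
    show (MulAut.conj (y ^ q)) x₁ = x₁
    rw [this]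
    simp
  have hxkp : ∀ k, xk k ^ p = 1 := fun k => by
    rw [hxkdef]
    simp only
    rw [← map_pow, hx₁p, map_one]
  have hxkcomm : ∀ a b, a < q → b < q → Commute (xk a) (xk b) := by
    intro a b ha hb
    rcases eq_or_ne a b with rfl | hne
    · exact Commute.refl _
    · exact hcomm (fk a) (fk b) (fun h => hne (hfkinj a b ha hb h)) _ (hxkmem a) _ (hxkmem b)
  -- the product x
  set x : G := ((List.range q).map xk).prod with hxdef
  have hmemL : ∀ z ∈ (List.range q).map xk, ∃ k < q, xk k = z := by
    intro z hz
    obtain ⟨k, hk, rfl⟩ := List.mem_map.mp hz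
    exact ⟨k, List.mem_range.mp hk, rfl⟩
  have hLcomm : ∀ a ∈ (List.range q).map xk, ∀ b ∈ (List.range q).map xk, Commute a b := by
    intro a ha b hb
    obtain ⟨ka, hka, rfl⟩ := hmemL a ha
    obtain ⟨kb, hkb, rfl⟩ := hmemL b hb
    exact hxkcomm ka kb hka hkb
  have hxp : x ^ p = 1 := by
    rw [hxdef, list_prod_pow_of_commute _ hLcomm p]
    apply List.prod_eq_one
    intro z hz
    rw [List.map_map] at hz
    obtain ⟨k, _, rfl⟩ := List.mem_map.mp hz
    exact hxkp k
  -- decompose q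
  have hqpos : 0 < q := hq.pos
  obtain ⟨q', hq'⟩ : ∃ q', q = q' + 1 := ⟨q - 1, by omega⟩
  have hsplit : x = xk 0 * ((List.range q').map fun i => xk (i + 1)).prod := by
    rw [hxdef, hq']
    exact List.prod_range_succ' xk q'
  have hPmem : ((List.range q').map fun i => xk (i + 1)).prod ∈ ⨆ j, ⨆ _ : j ≠ i₀, S j := by
    apply Subgroup.list_prod_mem
    intro z hz
    obtain ⟨k, hk, rfl⟩ := List.mem_map.mp hz
    have hkr := List.mem_range.mp hk
    have hk' : k + 1 < q := by omega
    have hne : fk (k + 1) ≠ i₀ := by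
      rw [← hfk0]
      intro h
      have := hfkinj (k + 1) 0 hk' (by omega) h
      omega
    exact le_iSup_of_le (f := fun j => ⨆ _ : j ≠ i₀, S j) (fk (k + 1)) (le_iSup (fun _ : fk (k + 1) ≠ i₀ => S (fk (k + 1))) hne)
      (hxkmem (k + 1))
  have hxne : x ≠ 1 := by
    intro hx1
    have h1 : xk 0 = (((List.range q').map fun i => xk (i + 1)).prod)⁻¹ := by
      rw [hsplit] at hx1
      exact eq_inv_of_mul_eq_one_left hx1
    have h2 : xk 0 ∈ ⨆ j, ⨆ _ : j ≠ i₀, S j := by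
      rw [h1]; exact inv_mem hPmem
    have h3 : xk 0 ∈ S i₀ := hxk0 ▸ hx₁mem
    have := Subgroup.disjoint_def.mp (hind i₀) h3 h2
    rw [hxk0] at this
    exact hx₁ne this
  have hxord : orderOf x = p := orderOf_eq_prime hxp hxne
  -- x commutes with y
  have hshift : ∀ k, (MulAut.conj y) (xk k) = xk (k + 1) := by
    intro k
    show (MulAut.conj y) ((MulAut.conj (y ^ k)) x₁) = (MulAut.conj (y ^ (k + 1))) x₁
    rw [pow_succ']
    simp [MulAut.conj_apply, mul_assoc]
  have hconjx : (MulAut.conj y) x = x := by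
    have h1 : (MulAut.conj y) x = (((List.range q).map xk).map (MulAut.conj y)).prod := by
      rw [hxdef]
      exact map_list_prod (MulAut.conj y) _
    rw [List.map_map] at h1
    have h2 : (List.range q).map ((MulAut.conj y) ∘ xk) = (List.range q).map fun i => xk (i + 1) := by
      apply List.map_congr_left
      intro k _
      exact hshift k
    rw [h2] at h1
    have h3 : ((List.range q).map fun i => xk (i + 1)).prod
        = ((List.range q').map fun i => xk (i + 1)).prod * xk (q' + 1) := by
      rw [hq']
      exact List.prod_range_succ _ q'
    have h4 : xk (q' + 1) = xk 0 := by rw [← hq', hxkq, hxk0]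
    have hcomm0 : Commute (xk 0) (((List.range q').map fun i => xk (i + 1)).prod) := by
      apply Commute.list_prod_right
      intro z hz
      obtain ⟨k, hk, rfl⟩ := List.mem_map.mp hz
      have hkr := List.mem_range.mp hk
      exact hxkcomm 0 (k + 1) (by omega) (by omega)
    rw [h1, h3, h4, ← hcomm0, ← hsplit]
  have hcxy : Commute x y := by
    have : y * x * y⁻¹ = x := by
      have := hconjx
      simpa [MulAut.conj_apply] using this
    have h5 : y * x = x * y := by
      have := congrArg (· * y) this
      simpa [mul_assoc] using this
    exact h5.symm
  refine ⟨x * y, ?_⟩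
  rw [hcxy.orderOf_mul_eq_mul_orderOf_of_coprime
    (by rw [hxord, hy]; exact (Nat.coprime_primes hp hq).mpr hpq), hxord, hy]
end

section
/- Let H = M ⋊ (P ⋊ ⟨b⟩) be a finite group where M is an elementary abelian q-group, P = ⟨a⟩ has prime order p ≠ q, ⟨b⟩ has order q^k acting faithfully on P, the kernel of the action of P on M is trivial (MP is Frobenius with kernel M), and C_M(P) = 1. Then the number of Sylow p-subgroups of H equals |M|, and the normalizer N_H(P₀) of any Sylow p-subgroup P₀ of H is isomorphic to the Frobenius group C_p ⋊ C_{q^k}. -/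
open Pointwise


/-- For the 2-Frobenius group `H = M ⋊ (⟨a⟩ ⋊ ⟨b⟩)` with `M` elementary abelian
`q`-group, `|a| = p`, `|b| = q^k` acting faithfully on `⟨a⟩` and `C_M(a) = 1`:
the number of Sylow `p`-subgroups of `H` is `|M|` and the normalizer of each Sylow
`p`-subgroup is a Frobenius group isomorphic to `C_p ⋊ C_{q^k}`. -/
theorem stmt9 (p q k : ℕ) (hp : p.Prime) (hq : q.Prime) (hpq : p ≠ q) (hk : 0 < k)
    (H : Type*) [Group H] [Finite H]
    (M : Subgroup H) [M.Normal]
    (hMab : ∀ x y : M, Commute x y) (hMel : ∀ x : M, x ^ q = 1)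
    (a b : H) (ha : orderOf a = p) (hb : orderOf b = q ^ k)
    (hbnorm : b ∈ Subgroup.normalizer ((Subgroup.zpowers a : Subgroup H) : Set H))
    (hfaith : ∀ j : ℕ, b ^ j * a * (b ^ j)⁻¹ = a ↔ q ^ k ∣ j)
    (hcompl : M ⊓ Subgroup.closure {a, b} = ⊥)
    (htop : M ⊔ Subgroup.closure {a, b} = ⊤)
    (hfpf : ∀ m ∈ M, Commute m a → m = 1) :
    Nat.card (Sylow p H) = Nat.card M ∧
    ∀ P₀ : Sylow p H, ∃ u v : H,
      u ∈ Subgroup.normalizer ((P₀ : Subgroup H) : Set H) ∧ v ∈ Subgroup.normalizer ((P₀ : Subgroup H) : Set H) ∧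
      orderOf u = p ∧ orderOf v = q ^ k ∧
      Nat.card (Subgroup.normalizer ((P₀ : Subgroup H) : Set H)) = p * q ^ k ∧
      (∀ j : ℕ, v ^ j * u * (v ^ j)⁻¹ = u ↔ q ^ k ∣ j) := by
  haveI := Fact.mk hp
  set A := Subgroup.zpowers a with hAdef
  set K := Subgroup.closure ({a, b} : Set H) with hKdef
  have haK : a ∈ K := Subgroup.subset_closure (by simp)
  have hbK : b ∈ K := Subgroup.subset_closure (by simp)
  have hAK : A ≤ K := Subgroup.zpowers_le.mpr haK
  have hKnorm : K ≤ Subgroup.normalizer (A : Set H) := by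
    rw [hKdef]
    refine (Subgroup.closure_le _).mpr ?_
    intro x hx
    simp only [Set.mem_insert_iff, Set.mem_singleton_iff] at hx
    rcases hx with rfl | rfl
    · exact Subgroup.le_normalizer (Subgroup.mem_zpowers _)
    · exact hbnorm
  have cardA : Nat.card A = p := by rw [hAdef, Nat.card_zpowers, ha]
  -- the normalizer of A is K
  have hNA : Subgroup.normalizer (A : Set H) = K := by
    refine le_antisymm ?_ hKnorm
    intro h hh
    have hhtop : h ∈ M ⊔ K := by rw [htop]; exact Subgroup.mem_top h
    have hmem : h ∈ (M : Set H) * (K : Set H) := by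
      rw [← Subgroup.normal_mul]; exact hhtop
    obtain ⟨m, hm, c, hc, rfl⟩ := hmem
    have hcN : c ∈ Subgroup.normalizer (A : Set H) := hKnorm hc
    have hmN : m ∈ Subgroup.normalizer (A : Set H) := by
      have := mul_mem hh (inv_mem hcN)
      simpa using this
    have h1 : m * a * m⁻¹ ∈ A :=
      (Subgroup.mem_normalizer_iff.mp hmN a).mp (Subgroup.mem_zpowers a)
    have h2 : m * a * m⁻¹ * a⁻¹ ∈ M := by
      have : m * (a * m⁻¹ * a⁻¹) ∈ M :=
        mul_mem hm (Subgroup.Normal.conj_mem ‹M.Normal› m⁻¹ (inv_mem hm) a)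
      simpa [mul_assoc] using this
    have h3 : m * a * m⁻¹ * a⁻¹ ∈ A := mul_mem h1 (inv_mem (Subgroup.mem_zpowers a))
    have h4 : m * a * m⁻¹ * a⁻¹ ∈ M ⊓ A := ⟨h2, h3⟩
    have hMA : M ⊓ A = ⊥ := by
      rw [← le_bot_iff, ← hcompl]
      exact inf_le_inf_left M hAK
    rw [hMA, Subgroup.mem_bot] at h4
    have hcomm : Commute m a := by
      have : m * a * m⁻¹ = a := by
        have := mul_eq_one_iff_eq_inv.mp h4
        simpa using this
      rw [Commute, SemiconjBy]
      calc m * a = (m * a * m⁻¹) * m := by group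
      _ = a * m := by rw [this]
    have hm1 : m = 1 := hfpf m hm hcomm
    subst hm1
    simpa using hc
  -- p does not divide |M|
  have hpM : ¬ p ∣ Nat.card M := by
    intro hdvd
    obtain ⟨x, hx⟩ := exists_prime_orderOf_dvd_card' (G := M) p hdvd
    have hdq : orderOf x ∣ q := orderOf_dvd_of_pow_eq_one (hMel x)
    rw [hx] at hdq
    exact hpq ((Nat.prime_dvd_prime_iff_eq hp hq).mp hdq)
  have hcop : Nat.Coprime p (q ^ k) := ((Nat.coprime_primes hp hq).mpr hpq).pow_right k
  -- card K = p * q^k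
  have haKorder : orderOf (⟨a, haK⟩ : K) = p := by
    rw [← ha]; exact (orderOf_injective K.subtype K.subtype_injective ⟨a, haK⟩).symm
  have hbKorder : orderOf (⟨b, hbK⟩ : K) = q ^ k := by
    rw [← hb]; exact (orderOf_injective K.subtype K.subtype_injective ⟨b, hbK⟩).symm
  have hdvd1 : p * q ^ k ∣ Nat.card K :=
    hcop.mul_dvd_of_dvd_of_dvd (haKorder ▸ orderOf_dvd_natCard _)
      (hbKorder ▸ orderOf_dvd_natCard _)
  haveI hA'norm : (A.subgroupOf K).Normal := by
    rw [Subgroup.normal_subgroupOf_iff hAK]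
    intro x g hx hg
    exact (Subgroup.mem_normalizer_iff.mp (hKnorm hg) x).mp hx
  have cardA' : Nat.card (A.subgroupOf K) = p := by
    rw [Nat.card_congr (Subgroup.subgroupOfEquivOfLe hAK).toEquiv, cardA]
  have hquot : ∀ y : K ⧸ (A.subgroupOf K),
      y ∈ Subgroup.zpowers ((⟨b, hbK⟩ : K) : K ⧸ (A.subgroupOf K)) := by
    intro y
    obtain ⟨⟨x, hx⟩, rfl⟩ := QuotientGroup.mk_surjective y
    induction hx using Subgroup.closure_induction with
    | mem z hz =>
      rcases hz with rfl | rfl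
      · have : ((⟨z, Subgroup.subset_closure (by simp)⟩ : K) : K ⧸ (A.subgroupOf K)) = 1 := by
          rw [QuotientGroup.eq_one_iff]
          exact Subgroup.mem_subgroupOf.mpr (Subgroup.mem_zpowers z)
        rw [this]
        exact one_mem _
      · exact Subgroup.mem_zpowers _
    | one => exact one_mem _
    | mul x y hx hy ihx ihy => exact mul_mem ihx ihy
    | inv x hx ih => exact inv_mem ih
  have hcardQ : Nat.card (K ⧸ (A.subgroupOf K)) ∣ q ^ k := by
    have htopQ : Subgroup.zpowers ((⟨b, hbK⟩ : K) : K ⧸ (A.subgroupOf K)) = ⊤ := by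
      rw [Subgroup.eq_top_iff']
      exact hquot
    have h1 : Nat.card (K ⧸ (A.subgroupOf K)) =
        orderOf ((⟨b, hbK⟩ : K) : K ⧸ (A.subgroupOf K)) := by
      rw [← Nat.card_zpowers, htopQ, Subgroup.card_top]
    rw [h1, ← hbKorder]
    exact orderOf_map_dvd (QuotientGroup.mk' (A.subgroupOf K)) _
  have hdvd2 : Nat.card K ∣ p * q ^ k := by
    have hmi := Subgroup.card_mul_index (A.subgroupOf K)
    rw [cardA'] at hmi
    rw [← hmi]
    have hidx : (A.subgroupOf K).index ∣ q ^ k := by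
      rw [Subgroup.index_eq_card]
      exact hcardQ
    exact mul_dvd_mul_left p hidx
  have cardK : Nat.card K = p * q ^ k := Nat.dvd_antisymm hdvd2 hdvd1
  -- M and K are complements
  have hcompl' : Subgroup.IsComplement' M K :=
    Subgroup.isComplement'_of_disjoint_and_mul_eq_univ (disjoint_iff.mpr hcompl)
      (by rw [← Subgroup.normal_mul, htop, Subgroup.coe_top])
  have hcardH : Nat.card M * Nat.card K = Nat.card H := hcompl'.card_mul
  have hKindex : K.index = Nat.card M := by
    have h1 := Subgroup.card_mul_index K
    have hKpos : 0 < Nat.card K := Nat.card_pos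
    exact Nat.eq_of_mul_eq_mul_left hKpos (by rw [h1, ← hcardH, mul_comm])
  -- A is a Sylow p-subgroup
  have hApgroup : IsPGroup p ↥A := IsPGroup.of_card (n := 1) (by rw [cardA, pow_one])
  obtain ⟨Q, hQ⟩ := hApgroup.exists_le_sylow
  have hQcard : Nat.card (Q : Subgroup H) = p := by
    obtain ⟨n, hn⟩ := IsPGroup.iff_card.mp Q.2
    have hdvdH : p ^ n ∣ Nat.card H := hn ▸ Subgroup.card_subgroup_dvd_card _
    rw [← hcardH, cardK] at hdvdH
    have hnotd : ¬ p ∣ Nat.card M * q ^ k := by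
      intro hd
      rcases (Nat.Prime.dvd_mul hp).mp hd with h | h
      · exact hpM h
      · exact hpq (hp.dvd_of_dvd_pow h |> (Nat.prime_dvd_prime_iff_eq hp hq).mp)
    have hcop' : Nat.Coprime (p ^ n) (Nat.card M * q ^ k) :=
      Nat.Coprime.pow_left n (hp.coprime_iff_not_dvd.mpr hnotd)
    have hdp : p ^ n ∣ p := by
      refine hcop'.dvd_of_dvd_mul_left ?_
      calc p ^ n ∣ Nat.card M * (p * q ^ k) := hdvdH
      _ = (Nat.card M * q ^ k) * p := by ring
    have hpd : p ∣ p ^ n := by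
      have hdle := Subgroup.card_dvd_of_le hQ
      rw [cardA, hn] at hdle
      exact hdle
    rw [hn]
    exact Nat.dvd_antisymm hdp hpd
  have hQA : (Q : Subgroup H) = A :=
    (Subgroup.eq_of_le_of_card_ge hQ (by rw [hQcard, cardA])).symm
  constructor
  · rw [Sylow.card_eq_index_normalizer Q]
    show (Subgroup.normalizer ((Q : Subgroup H) : Set H)).index = _
    rw [hQA, hNA, hKindex]
  · intro P₀
    obtain ⟨g, hg⟩ := MulAction.exists_smul_eq H Q P₀
    have hP₀ : (P₀ : Subgroup H) = A.map (MulAut.conj g).toMonoidHom := by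
      rw [← hg, Sylow.coe_subgroup_smul, hQA]
      rfl
    have hPnorm : Subgroup.normalizer ((P₀ : Subgroup H) : Set H) = K.map (MulAut.conj g).toMonoidHom := by
      rw [hP₀, ← Subgroup.map_equiv_normalizer_eq A (MulAut.conj g), hNA]
    have hconj : ∀ x : H, (MulAut.conj g).toMonoidHom x = g * x * g⁻¹ := fun x => rfl
    refine ⟨g * a * g⁻¹, g * b * g⁻¹, ?_, ?_, ?_, ?_, ?_, ?_⟩
    · rw [hPnorm]
      exact Subgroup.mem_map.mpr ⟨a, haK, rfl⟩
    · rw [hPnorm]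
      exact Subgroup.mem_map.mpr ⟨b, hbK, rfl⟩
    · rw [← ha]
      exact (hconj a) ▸ orderOf_injective (MulAut.conj g).toMonoidHom
        (MulAut.conj g).injective a
    · rw [← hb]
      exact (hconj b) ▸ orderOf_injective (MulAut.conj g).toMonoidHom
        (MulAut.conj g).injective b
    · rw [hPnorm, ← cardK]
      exact (Nat.card_congr (Subgroup.equivMapOfInjective K (MulAut.conj g).toMonoidHom
        (MulAut.conj g).injective).toEquiv).symm
    · intro j
      rw [conj_pow]
      constructor
      · intro hj
        refine (hfaith j).mp ?_
        have : g * (b ^ j * a * (b ^ j)⁻¹) * g⁻¹ = g * a * g⁻¹ := by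
          calc g * (b ^ j * a * (b ^ j)⁻¹) * g⁻¹
              = (g * b ^ j * g⁻¹) * (g * a * g⁻¹) * (g * b ^ j * g⁻¹)⁻¹ := by group
          _ = g * a * g⁻¹ := hj
        have := mul_left_cancel (mul_right_cancel this)
        exact this
      · intro hj
        have h0 := (hfaith j).mpr hj
        calc (g * b ^ j * g⁻¹) * (g * a * g⁻¹) * (g * b ^ j * g⁻¹)⁻¹
            = g * (b ^ j * a * (b ^ j)⁻¹) * g⁻¹ := by group
        _ = g * a * g⁻¹ := by rw [h0]
end

section
/- Let H be a finite group with normal subgroup M, let y ∈ H have prime-power order q^k with ⟨y⟩ ∩ M = 1, and suppose y normalizes a Sylow p-subgroup P₀ of H (p a prime distinct from q) with N_M(P₀) = 1. Then for m ∈ M, the element y normalizes P₀^m if and only if m ∈ C_M(y). -/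
/-- If `y` of order `q^k` with `⟨y⟩ ∩ M = 1` normalizes a Sylow `p`-subgroup `P₀`
of `H` with `N_M(P₀) = 1`, then for `m ∈ M`, `y` normalizes `P₀^m = m⁻¹P₀m` if and
only if `m ∈ C_M(y)`. -/
theorem stmt10 (p q k : ℕ) (hp : p.Prime) (hq : q.Prime) (hpq : p ≠ q) (hk : 0 < k)
    (H : Type*) [Group H] [Finite H] (M : Subgroup H) [M.Normal]
    (P₀ : Sylow p H) (hNM : M ⊓ Subgroup.normalizer ((P₀ : Subgroup H) : Set H) = ⊥)
    (y : H) (hy : orderOf y = q ^ k) (hyM : Subgroup.zpowers y ⊓ M = ⊥)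
    (hynorm : y ∈ Subgroup.normalizer ((P₀ : Subgroup H) : Set H)) :
    ∀ m ∈ M,
      (y ∈ Subgroup.normalizer (((P₀ : Subgroup H).map (MulAut.conj m⁻¹).toMonoidHom : Subgroup H) : Set H) ↔ Commute m y) := by
  intro m hm
  have hmap : Subgroup.normalizer (((P₀ : Subgroup H).map (MulAut.conj m⁻¹).toMonoidHom : Subgroup H) : Set H)
      = (Subgroup.normalizer ((P₀ : Subgroup H) : Set H)).map (MulAut.conj m⁻¹).toMonoidHom := by
    rw [Subgroup.map_equiv_normalizer_eq (P₀ : Subgroup H)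
      ((MulAut.conj m⁻¹) : H ≃* H)]
  rw [hmap]
  constructor
  · rintro ⟨x, hx, hxy⟩
    -- hxy : m⁻¹ * x * m = y, so x = m * y * m⁻¹ ∈ N(P₀)
    simp only [MulEquiv.coe_toMonoidHom, MulAut.conj_apply] at hxy
    have hx' : m * y * m⁻¹ ∈ Subgroup.normalizer ((P₀ : Subgroup H) : Set H) := by
      have : x = m * y * m⁻¹ := by
        rw [← hxy]; group
      rwa [← this]
    have hcomm : m * y * m⁻¹ * y⁻¹ ∈ Subgroup.normalizer ((P₀ : Subgroup H) : Set H) :=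
      Subgroup.mul_mem _ hx' (Subgroup.inv_mem _ hynorm)
    have hM : m * y * m⁻¹ * y⁻¹ ∈ M := by
      have : m * (y * m⁻¹ * y⁻¹) ∈ M :=
        Subgroup.mul_mem _ hm (by
          have := Subgroup.Normal.conj_mem ‹M.Normal› m⁻¹ (Subgroup.inv_mem _ hm) y
          simpa [mul_assoc] using this)
      simpa [mul_assoc] using this
    have : m * y * m⁻¹ * y⁻¹ ∈ M ⊓ Subgroup.normalizer ((P₀ : Subgroup H) : Set H) := ⟨hM, hcomm⟩
    rw [hNM, Subgroup.mem_bot] at this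
    have heq : m * y = y * m := by
      calc m * y = (m * y * m⁻¹ * y⁻¹) * (y * m) := by group
        _ = y * m := by rw [this]; group
    exact heq
  · intro hcomm
    refine ⟨y, hynorm, ?_⟩
    simp only [MulEquiv.coe_toMonoidHom, MulAut.conj_apply]
    have : m⁻¹ * y * m = y := by
      rw [hcomm.inv_left.eq]; group
    simpa using this
end

section
/- Let G be a finite group and p a prime such that q^k divides p−1 for a prime q ≠ p and integer k ≥ 1. Suppose the Fitting subgroup F(G) of G is a nontrivial p-group, G is solvable, and b ∈ G has order q^k. Then either b centralizes F(G), or G contains a subgroup of order p·q^k isomorphic to a (possibly nonfaithful) semidirect product C_p ⋊ C_{q^k} with b as complement generator; in particular, if b acts on F(G) as an automorphism of order q^k, then there exists a ∈ F(G) of order p with ⟨a⟩ normalized by b and C_p ⋊ ⟨b⟩ ≅ C_p ⋊ C_{q^k} Frobenius. -/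
open Subgroup Polynomial

lemma mulAut_pow_succ {P : Type*} [Group P] (σ : MulAut P) (n : ℕ) (x : P) :
    (σ ^ (n+1)) x = σ ((σ ^ n) x) := by rw [pow_succ']; rfl

lemma coprime_kill {p q k : ℕ} {P : Type*} [Group P] (hp : p.Prime) (hq : q.Prime) (hpq : p ≠ q)
    {x : P} (h1 : x ^ p = 1) (h2 : x ^ q ^ k = 1) : x = 1 := by
  have d1 : orderOf x ∣ p := orderOf_dvd_iff_pow_eq_one.2 h1
  have d2 : orderOf x ∣ q ^ k := orderOf_dvd_iff_pow_eq_one.2 h2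
  have hc : Nat.Coprime p (q ^ k) := (Nat.coprime_primes hp hq |>.2 hpq).pow_right _
  have := Nat.eq_one_of_dvd_coprimes hc d1 d2
  simpa [orderOf_eq_one_iff] using this

lemma L1 {p q k : ℕ} (hp : p.Prime) (hq : q.Prime) (hpq : p ≠ q)
    {A : Type*} [CommGroup A] (hA : IsPGroup p A) (τ : MulAut A)
    (hτ : τ ^ q ^ k = 1) (h1 : ∀ y : A, y ^ p = 1 → τ y = y) :
    ∀ x : A, τ x = x := by
  intro x
  obtain ⟨n, hn⟩ := hA x
  induction n generalizing x with
  | zero =>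
    simp only [pow_zero, pow_one] at hn
    simp [hn]
  | succ n ih =>
    have hxp : τ (x ^ p) = x ^ p := by
      refine ih (x ^ p) ?_
      rw [← pow_mul, ← pow_succ']
      exact hn
    set c := τ x * x⁻¹ with hc
    have hτx : τ x = x * c := by rw [hc, mul_comm, inv_mul_cancel_right]
    have hcp : c ^ p = 1 := by
      rw [hc, mul_pow, inv_pow, ← map_pow, hxp, mul_inv_cancel]
    have hτc : τ c = c := h1 c hcp
    have key : ∀ m, (τ ^ m) x = x * c ^ m := by
      intro m; induction m with
      | zero => simp
      | succ m ihm =>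
        rw [mulAut_pow_succ, ihm, map_mul, map_pow, hτc, hτx, mul_assoc, ← pow_succ']
    have hx := key (q ^ k)
    rw [hτ] at hx
    have hcq : c ^ q ^ k = 1 := by
      have : x * 1 = x * c ^ q ^ k := by rw [mul_one]; exact hx
      exact (mul_left_cancel this).symm
    have hc1 : c = 1 := coprime_kill hp hq hpq hcp hcq
    rw [hτx, hc1, mul_one]

lemma order_eq_prime_pow {M : Type*} [Monoid M] {q t : ℕ} (hq : q.Prime) {g : M}
    (h1 : g ^ q ^ t = 1) (h2 : g ^ q ^ (t-1) ≠ 1) : orderOf g = q ^ t := by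
  obtain ⟨s, hs, hgs⟩ := (Nat.dvd_prime_pow hq).1 (orderOf_dvd_iff_pow_eq_one.2 h1)
  rcases Nat.lt_or_ge s t with h | h
  · exfalso; apply h2
    have : orderOf g ∣ q ^ (t-1) := hgs ▸ pow_dvd_pow q (by omega)
    exact orderOf_dvd_iff_pow_eq_one.1 this
  · rw [hgs, le_antisymm hs h]

lemma L2aux {p q k : ℕ} (hp : p.Prime) (hq : q.Prime) (hpq : p ≠ q) (hdvd : q ^ k ∣ p - 1)
    {V : Type*} [CommGroup V] [Finite V] [Nontrivial V]
    [Module (ZMod p) (Additive V)]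
    (σ : MulAut V) (hσ : σ ^ q ^ k = 1) :
    ∃ (a : V) (r : ℕ), a ≠ 1 ∧ σ a = a ^ r ∧ orderOf ((r : ZMod p)) = orderOf σ := by
  haveI : Fact p.Prime := ⟨hp⟩
  have hσd : orderOf σ ∣ q ^ k := orderOf_dvd_iff_pow_eq_one.2 hσ
  obtain ⟨t, htk, htd⟩ := (Nat.dvd_prime_pow hq).1 hσd
  by_cases ht0 : t = 0
  · subst ht0
    simp only [pow_zero] at htd
    have hσ1 : σ = 1 := orderOf_eq_one_iff.1 htd
    obtain ⟨a, ha⟩ := exists_ne (1 : V)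
    exact ⟨a, 1, ha, by simp [hσ1], by simp [htd]⟩
  have ht1 : 1 ≤ t := by omega
  set Tadd : Additive V →+ Additive V := MonoidHom.toAdditive σ.toMonoidHom with hTadddef
  set T : Module.End (ZMod p) (Additive V) := Tadd.toZModLinearMap p with hTdef
  have hTapply : ∀ x : Additive V, T x = Additive.ofMul (σ (Additive.toMul x)) := fun _ => rfl
  have hTpow : ∀ (n : ℕ) (x : Additive V),
      (T ^ n) x = Additive.ofMul ((σ ^ n) (Additive.toMul x)) := by
    intro n
    induction n with
    | zero => intro x; simp
    | succ n ih =>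
      intro x
      rw [pow_succ, Module.End.mul_apply, pow_succ, MulAut.mul_apply, hTapply, ih]
      simp
  have hTof : ∀ (n : ℕ), σ ^ n = 1 → T ^ n = 1 := by
    intro n hn
    apply LinearMap.ext
    intro x
    rw [hTpow, hn]
    simp
  have hTk : T ^ q ^ k = 1 := hTof _ hσ
  have hTt : T ^ q ^ t = 1 := hTof _ (htd ▸ pow_orderOf_eq_one σ)
  have hTe : ¬ T ^ q ^ (t-1) = 1 := by
    intro h
    have hσe : σ ^ q ^ (t-1) = 1 := by
      apply MulEquiv.ext
      intro y
      have h2 := hTpow (q ^ (t-1)) (Additive.ofMul y)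
      rw [h] at h2
      simp only [Module.End.one_apply] at h2
      have := congrArg Additive.toMul h2.symm
      simpa using this
    have hdd := orderOf_dvd_iff_pow_eq_one.2 hσe
    rw [htd] at hdd
    have := (Nat.pow_dvd_pow_iff_le_right hq.one_lt).1 hdd
    omega
  haveI : Module.Finite (ZMod p) (Additive V) := Module.Finite.of_finite
  haveI := Module.End.isIntegral (R := ZMod p) (M := Additive V)
  have hint : IsIntegral (ZMod p) T := Algebra.IsIntegral.isIntegral T
  have hmonic : (minpoly (ZMod p) T).Monic := minpoly.monic hint
  have hm0 : (minpoly (ZMod p) T) ≠ 0 := minpoly.ne_zero hint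
  have hqk0 : q ^ k ≠ 0 := pow_ne_zero _ hq.pos.ne'
  have hmdvd : (minpoly (ZMod p) T) ∣ (X : (ZMod p)[X]) ^ q ^ k - 1 := by
    apply minpoly.dvd
    rw [map_sub, map_one, aeval_X_pow, hTk, sub_self]
  have hcast : ((q ^ k : ℕ) : ZMod p) ≠ 0 := by
    rw [Ne, ZMod.natCast_eq_zero_iff]
    intro h
    exact hpq ((Nat.prime_dvd_prime_iff_eq hp hq).1 (hp.dvd_of_dvd_pow h))
  have hsep : ((X : (ZMod p)[X]) ^ q ^ k - 1).Separable := by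
    have := Polynomial.separable_X_pow_sub_C (F := ZMod p) (1 : ZMod p)
      (by exact_mod_cast hcast) one_ne_zero
    simpa using this
  obtain ⟨g, hg⟩ := IsCyclic.exists_ofOrder_eq_natCard (α := (ZMod p)ˣ)
  have hcardu : Nat.card (ZMod p)ˣ = p - 1 := by
    rw [Nat.card_eq_fintype_card, ZMod.card_units]
  rw [hcardu] at hg
  have hp1 : p - 1 ≠ 0 := by have := hp.two_le; omega
  have hm0dvd : (p - 1) / q ^ k ∣ p - 1 := Nat.div_dvd_of_dvd hdvd
  have hordgm : orderOf (g ^ ((p - 1) / q ^ k)) = q ^ k := by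
    rw [orderOf_pow, hg, Nat.gcd_eq_right hm0dvd, Nat.div_div_self hdvd hp1]
  have hordζ : orderOf ((g ^ ((p - 1) / q ^ k) : (ZMod p)ˣ) : ZMod p) = q ^ k := by
    rw [orderOf_units, hordgm]
  have hprim : IsPrimitiveRoot ((g ^ ((p - 1) / q ^ k) : (ZMod p)ˣ) : ZMod p) (q ^ k) := by
    have := IsPrimitiveRoot.orderOf ((g ^ ((p - 1) / q ^ k) : (ZMod p)ˣ) : ZMod p)
    rwa [hordζ] at this
  have hsplits : Splits ((X : (ZMod p)[X]) ^ q ^ k - 1) := by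
    rw [X_pow_sub_one_eq_prod (Nat.pos_of_ne_zero hqk0) hprim]
    exact Splits.prod (fun z _ => Splits.X_sub_C _)
  have hXk0 : ((X : (ZMod p)[X]) ^ q ^ k - 1) ≠ 0 := by
    have := X_pow_sub_C_ne_zero (Nat.pos_of_ne_zero hqk0) (1 : ZMod p)
    simpa using this
  have hmsep : (minpoly (ZMod p) T).Separable := hsep.of_dvd hmdvd
  have hmsplits : Splits (minpoly (ZMod p) T) :=
    hsplits.of_dvd hXk0 hmdvd
  have hmprod : minpoly (ZMod p) T
      = (Multiset.map (fun a => X - C a) (minpoly (ZMod p) T).roots).prod :=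
    hmsplits.eq_prod_roots_of_monic hmonic
  by_cases hall : ∀ μ ∈ (minpoly (ZMod p) T).roots, μ ^ q ^ (t-1) = 1
  · exfalso
    apply hTe
    have het0 : q ^ (t-1) ≠ 0 := pow_ne_zero _ hq.pos.ne'
    have hXe0 : ((X : (ZMod p)[X]) ^ q ^ (t-1) - 1) ≠ 0 := by
      have := X_pow_sub_C_ne_zero (Nat.pos_of_ne_zero het0) (1 : ZMod p)
      simpa using this
    obtain ⟨c, hc⟩ : q ^ (t-1) ∣ q ^ k := pow_dvd_pow q (by omega)
    have hdvdXe : ((X : (ZMod p)[X]) ^ q ^ (t-1) - 1) ∣ ((X : (ZMod p)[X]) ^ q ^ k - 1) := by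
      have hd := sub_dvd_pow_sub_pow ((X : (ZMod p)[X]) ^ q ^ (t-1)) 1 c
      rw [← pow_mul, one_pow, ← hc] at hd
      exact hd
    have hXesplits : Splits ((X : (ZMod p)[X]) ^ q ^ (t-1) - 1) :=
      hsplits.of_dvd hXk0 hdvdXe
    have hXemonic : ((X : (ZMod p)[X]) ^ q ^ (t-1) - 1).Monic := by
      have := monic_X_pow_sub_C (1 : ZMod p) het0
      simpa using this
    have hXeprod : ((X : (ZMod p)[X]) ^ q ^ (t-1) - 1)
        = (Multiset.map (fun a => X - C a) ((X : (ZMod p)[X]) ^ q ^ (t-1) - 1).roots).prod :=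
      hXesplits.eq_prod_roots_of_monic hXemonic
    have hnodup : (minpoly (ZMod p) T).roots.Nodup := nodup_roots hmsep
    have hsubset : (minpoly (ZMod p) T).roots ⊆ ((X : (ZMod p)[X]) ^ q ^ (t-1) - 1).roots := by
      intro μ hμ
      rw [mem_roots hXe0]
      have hμr := hall μ hμ
      simp [IsRoot, hμr]
    have hle : (minpoly (ZMod p) T).roots ≤ ((X : (ZMod p)[X]) ^ q ^ (t-1) - 1).roots :=
      (Multiset.le_iff_subset hnodup).2 hsubset
    have hmdvdXe : minpoly (ZMod p) T ∣ (X : (ZMod p)[X]) ^ q ^ (t-1) - 1 := by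
      rw [hmprod, hXeprod]
      exact Multiset.prod_dvd_prod_of_le (Multiset.map_le_map hle)
    obtain ⟨c2, hc2⟩ := hmdvdXe
    have h0 : (aeval T) ((X : (ZMod p)[X]) ^ q ^ (t-1) - 1) = 0 := by
      rw [hc2, map_mul, minpoly.aeval, zero_mul]
    rw [map_sub, map_one, aeval_X_pow, sub_eq_zero] at h0
    exact h0
  · push_neg at hall
    obtain ⟨μ, hμmem, hμe⟩ := hall
    have hμroot : (minpoly (ZMod p) T).IsRoot μ := isRoot_of_mem_roots hμmem
    have heig : T.HasEigenvalue μ := Module.End.hasEigenvalue_iff_isRoot.2 hμroot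
    obtain ⟨v, hv⟩ := heig.exists_hasEigenvector
    have hμt : μ ^ q ^ t = 1 := by
      have h1 : (T ^ q ^ t) v = μ ^ q ^ t • v := hv.pow_apply _
      rw [hTt] at h1
      simp only [Module.End.one_apply] at h1
      have h2 : (μ ^ q ^ t - 1) • v = 0 := by
        rw [sub_smul, one_smul, ← h1, sub_self]
      rcases smul_eq_zero.1 h2 with h | h
      · exact sub_eq_zero.1 h
      · exact absurd h hv.2
    have hordμ : orderOf μ = q ^ t := order_eq_prime_pow hq hμt hμe
    refine ⟨Additive.toMul v, μ.val, ?_, ?_, ?_⟩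
    · intro h
      exact hv.2 (Additive.toMul.injective (by simpa using h))
    · have h1 : T v = μ • v := hv.apply_eq_smul
      have h2 : μ = ((μ.val : ℕ) : ZMod p) := (ZMod.natCast_rightInverse μ).symm
      rw [h2, Nat.cast_smul_eq_nsmul] at h1
      have h3 := congrArg Additive.toMul h1
      rw [toMul_nsmul] at h3
      exact h3
    · rw [ZMod.natCast_rightInverse μ, hordμ, htd]

lemma L2 {p q k : ℕ} (hp : p.Prime) (hq : q.Prime) (hpq : p ≠ q) (hdvd : q ^ k ∣ p - 1)
    {V : Type*} [CommGroup V] [Finite V] [Nontrivial V] (hV : ∀ v : V, v ^ p = 1)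
    (σ : MulAut V) (hσ : σ ^ q ^ k = 1) :
    ∃ (a : V) (r : ℕ), a ≠ 1 ∧ σ a = a ^ r ∧ orderOf ((r : ZMod p)) = orderOf σ := by
  letI : Module (ZMod p) (Additive V) := AddCommGroup.zmodModule (by
    intro x
    apply Additive.toMul.injective
    rw [toMul_nsmul, toMul_zero]
    exact hV _)
  exact L2aux hp hq hpq hdvd σ hσ


def autRestrict {P : Type*} [Group P] (σ : MulAut P) (B : Subgroup P)
    (h : ∀ x, x ∈ B ↔ σ x ∈ B) : MulAut ↥B where
  toFun u := ⟨σ u, (h u).1 u.2⟩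
  invFun u := ⟨σ.symm u, by
    have h2 := (h (σ.symm u)).2
    simp only [MulEquiv.apply_symm_apply] at h2
    exact h2 u.2⟩
  left_inv u := by ext; simp
  right_inv u := by ext; simp
  map_mul' u v := by ext; simp

@[simp] lemma autRestrict_apply_coe {P : Type*} [Group P] (σ : MulAut P) (B : Subgroup P)
    (h : ∀ x, x ∈ B ↔ σ x ∈ B) (u : ↥B) : ((autRestrict σ B h) u : P) = σ u := rfl

lemma autRestrict_pow_apply_coe {P : Type*} [Group P] (σ : MulAut P) (B : Subgroup P)
    (h : ∀ x, x ∈ B ↔ σ x ∈ B) (n : ℕ) (u : ↥B) :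
    (((autRestrict σ B h) ^ n) u : P) = (σ ^ n) u := by
  induction n with
  | zero => simp
  | succ n ih => rw [mulAut_pow_succ, mulAut_pow_succ, ← ih]; rfl

lemma pgrp_exists_order_p {p : ℕ} (hp : p.Prime) {P : Type*} [Group P] [Finite P] [Nontrivial P]
    (hP : IsPGroup p P) : ∃ x : P, orderOf x = p := by
  haveI : Fact p.Prime := ⟨hp⟩
  haveI := Fintype.ofFinite P
  have hcard : p ∣ Fintype.card P := by
    rcases hP.card_eq_or_dvd with h | h
    · rw [Nat.card_eq_fintype_card] at h
      have := Fintype.one_lt_card (α := P)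
      omega
    · rwa [Nat.card_eq_fintype_card] at h
  exact exists_prime_orderOf_dvd_card p hcard
lemma mem_center_iff_aut {P : Type*} [Group P] (σ : MulAut P) (x : P) :
    x ∈ Subgroup.center P ↔ σ x ∈ Subgroup.center P := by
  simp only [Subgroup.mem_center_iff]
  constructor
  · intro h g
    have := congrArg σ (h (σ.symm g))
    simpa using this
  · intro h g
    have := congrArg σ.symm (h (σ g))
    simpa using this

lemma center_map_aut {P : Type*} [Group P] (σ : MulAut P) :
    Subgroup.map (σ : P ≃* P) (Subgroup.center P) = Subgroup.center P := by
  ext y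
  simp only [Subgroup.mem_map]
  constructor
  · rintro ⟨x, hx, rfl⟩
    exact (mem_center_iff_aut σ x).1 hx
  · intro hy
    refine ⟨σ.symm y, ?_, by simp⟩
    have := (mem_center_iff_aut σ (σ.symm y))
    simp only [MulEquiv.apply_symm_apply] at this
    exact this.2 hy
lemma tail_lemma {p q k t : ℕ} (hp : p.Prime) (hq : q.Prime) (hpq : p ≠ q) (hdvd : q ^ k ∣ p - 1)
    {P : Type*} [Group P] [Finite P] (hP : IsPGroup p P)
    (σ : MulAut P) (hσ : σ ^ q ^ k = 1)
    (B : Subgroup P) (hBc : ∀ u ∈ B, ∀ v ∈ B, u * v = v * u)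
    (hBinv : ∀ x, x ∈ B ↔ σ x ∈ B)
    (ht1 : 1 ≤ t) (hσt : σ ^ q ^ t = 1)
    (hτB : ∃ u ∈ B, (σ ^ q ^ (t - 1)) u ≠ u) :
    ∃ (a : P) (r : ℕ), orderOf a = p ∧ σ a = a ^ r ∧ orderOf ((r : ZMod p)) = q ^ t := by
  haveI : Fact p.Prime := ⟨hp⟩
  letI hBcomm : CommGroup ↥B := { (inferInstance : Group ↥B) with mul_comm := fun a b => Subtype.ext (hBc a a.2 b b.2) }
  obtain ⟨u0, hu0B, hu0⟩ := hτB
  set σB := autRestrict σ B hBinv with hσBdef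
  have hσBpow : ∀ (n : ℕ) (u : ↥B), ((σB ^ n) u : P) = (σ ^ n) (u : P) :=
    fun n u => autRestrict_pow_apply_coe σ B hBinv n u
  have hpow_of : ∀ (n : ℕ), σ ^ n = 1 → σB ^ n = 1 := by
    intro n hn
    apply MulEquiv.ext
    intro u
    apply Subtype.ext
    rw [hσBpow, hn]
    rfl
  have hσBk : σB ^ q ^ k = 1 := hpow_of _ hσ
  have hσBt : σB ^ q ^ t = 1 := hpow_of _ hσt
  -- the Ω₁ subgroup of B
  let W : Subgroup ↥B :=
    { carrier := {u : ↥B | u ^ p = 1}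
      one_mem' := one_pow p
      mul_mem' := by
        intro a b ha hb
        simp only [Set.mem_setOf_eq] at *
        rw [mul_pow, ha, hb, mul_one]
      inv_mem' := by
        intro a ha
        simp only [Set.mem_setOf_eq] at *
        rw [inv_pow, ha, inv_one] }
  have hWmem : ∀ u : ↥B, u ∈ W ↔ u ^ p = 1 := fun _ => Iff.rfl
  have hWinv : ∀ u : ↥B, u ∈ W ↔ σB u ∈ W := by
    intro u
    rw [hWmem, hWmem, ← map_pow]
    constructor
    · intro h; rw [h, map_one]
    · intro h
      have := σB.injective (by rw [h, map_one] : σB (u ^ p) = σB 1)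
      exact this
  set σW := autRestrict σB W hWinv with hσWdef
  have hσWpow : ∀ (n : ℕ) (w : ↥W), ((σW ^ n) w : ↥B) = (σB ^ n) (w : ↥B) :=
    fun n w => autRestrict_pow_apply_coe σB W hWinv n w
  have hWpow_of : ∀ (n : ℕ), σB ^ n = 1 → σW ^ n = 1 := by
    intro n hn
    apply MulEquiv.ext
    intro w
    apply Subtype.ext
    rw [hσWpow, hn]
    rfl
  have hσWk : σW ^ q ^ k = 1 := hWpow_of _ hσBk
  have hσWt : σW ^ q ^ t = 1 := hWpow_of _ hσBt
  have hBpgrp : IsPGroup p ↥B := hP.to_subgroup B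
  have hσWe : ¬ σW ^ q ^ (t - 1) = 1 := by
    intro h
    -- then σB^{q^{t-1}} is trivial on all elements of order dividing p, hence trivial
    have h1 : ∀ y : ↥B, y ^ p = 1 → (σB ^ q ^ (t - 1)) y = y := by
      intro y hy
      have := congrArg (Subtype.val) (MulEquiv.ext_iff.1 h ⟨y, (hWmem y).2 hy⟩)
      rw [hσWpow] at this
      simpa using this
    have hτk : (σB ^ q ^ (t - 1)) ^ q ^ k = 1 := by
      rw [← pow_mul, mul_comm, pow_mul, hσBk, one_pow]
    have htriv := L1 hp hq hpq hBpgrp (σB ^ q ^ (t - 1)) hτk h1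
    apply hu0
    have := congrArg Subtype.val (htriv ⟨u0, hu0B⟩)
    rwa [hσBpow] at this
  -- nontrivial W
  have hu0ne : u0 ≠ 1 := by
    intro h
    apply hu0
    rw [h, map_one]
  haveI : Nontrivial ↥B := ⟨⟨⟨u0, hu0B⟩, 1, by simp [Subtype.ext_iff, hu0ne]⟩⟩
  obtain ⟨y, hy⟩ := pgrp_exists_order_p hp hBpgrp
  have hyW : y ∈ W := (hWmem y).2 (by rw [← hy]; exact pow_orderOf_eq_one y)
  have hyne : y ≠ 1 := by
    intro h
    rw [h, orderOf_one] at hy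
    exact hp.one_lt.ne hy
  haveI : Nontrivial ↥W := ⟨⟨⟨y, hyW⟩, 1, by simp [Subtype.ext_iff, hyne]⟩⟩
  have hVW : ∀ w : ↥W, w ^ p = 1 := by
    intro w
    apply Subtype.ext
    have := w.2
    rw [hWmem] at this
    push_cast
    exact_mod_cast congrArg Subtype.val this
  obtain ⟨a0, r, ha0ne, ha0eq, ha0ord⟩ := L2 hp hq hpq hdvd hVW σW hσWk
  have hordσW : orderOf σW = q ^ t := order_eq_prime_pow hq hσWt hσWe
  refine ⟨((a0 : ↥B) : P), r, ?_, ?_, ?_⟩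
  · have h1 : orderOf a0 = p := orderOf_eq_prime (hVW a0) ha0ne
    have h2 := orderOf_injective (B.subtype.comp W.subtype)
      (B.subtype_injective.comp W.subtype_injective) a0
    rw [← h1]
    exact h2
  · have := congrArg (Subtype.val) (congrArg (Subtype.val) ha0eq)
    rw [hσWdef] at this
    simpa [hσBdef] using this
  · rw [ha0ord, hordσW]
lemma coprime_kill_pow {p q k m : ℕ} {P : Type*} [Group P] (hp : p.Prime) (hq : q.Prime)
    (hpq : p ≠ q) {x : P} (h1 : x ^ p ^ m = 1) (h2 : x ^ q ^ k = 1) : x = 1 := by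
  have d1 : orderOf x ∣ p ^ m := orderOf_dvd_iff_pow_eq_one.2 h1
  have d2 : orderOf x ∣ q ^ k := orderOf_dvd_iff_pow_eq_one.2 h2
  have hc : Nat.Coprime (p ^ m) (q ^ k) :=
    (((Nat.coprime_primes hp hq).2 hpq).pow_right _).pow_left _
  have := Nat.eq_one_of_dvd_coprimes hc d1 d2
  simpa [orderOf_eq_one_iff] using this

lemma comm_center_aux {P : Type*} [Group P] {x z w : P} (hz : z ∈ Subgroup.center P)
    (hw : w ∈ Subgroup.center P) (i j : ℤ) :
    (x ^ i * z) * (x ^ j * w) = (x ^ j * w) * (x ^ i * z) := by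
  have hz' := Subgroup.mem_center_iff.1 hz
  have hw' := Subgroup.mem_center_iff.1 hw
  calc (x ^ i * z) * (x ^ j * w) = x ^ i * (z * x ^ j) * w := by
        rw [mul_assoc, mul_assoc, mul_assoc]
    _ = x ^ i * x ^ j * (z * w) := by rw [← hz' (x ^ j), mul_assoc, mul_assoc, mul_assoc]
    _ = x ^ j * x ^ i * (w * z) := by rw [← zpow_add, add_comm, zpow_add, hw' z]
    _ = x ^ j * (w * x ^ i) * z := by rw [← hw' (x ^ i), mul_assoc, mul_assoc, mul_assoc]
    _ = (x ^ j * w) * (x ^ i * z) := by rw [mul_assoc, mul_assoc, mul_assoc]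

universe u

lemma L3 {p q k : ℕ} (hp : p.Prime) (hq : q.Prime) (hpq : p ≠ q) (hdvd : q ^ k ∣ p - 1) :
    ∀ (n : ℕ) (P : Type u) [Group P] [Finite P], Nat.card P ≤ n →
    IsPGroup p P → Nontrivial P → ∀ (σ : MulAut P), σ ^ q ^ k = 1 →
    ∃ (a : P) (r : ℕ), orderOf a = p ∧ σ a = a ^ r ∧ orderOf ((r : ZMod p)) = orderOf σ := by
  intro n
  induction n with
  | zero =>
    intro P _ _ hcard _ _ _ _
    have := Nat.card_pos (α := P)
    omega
  | succ n ih =>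
    intro P _ _ hcard hP hnt σ hσ
    haveI : Fact p.Prime := ⟨hp⟩
    haveI : Nontrivial P := hnt
    have hσd : orderOf σ ∣ q ^ k := orderOf_dvd_iff_pow_eq_one.2 hσ
    obtain ⟨t, htk, htd⟩ := (Nat.dvd_prime_pow hq).1 hσd
    by_cases ht0 : t = 0
    · subst ht0
      simp only [pow_zero] at htd
      have hσ1 : σ = 1 := orderOf_eq_one_iff.1 htd
      obtain ⟨x, hx⟩ := pgrp_exists_order_p hp hP
      exact ⟨x, 1, hx, by simp [hσ1], by simp [htd]⟩
    have ht1 : 1 ≤ t := by omega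
    have hσt : σ ^ q ^ t = 1 := by rw [← htd]; exact pow_orderOf_eq_one σ
    have hτne : σ ^ q ^ (t - 1) ≠ 1 := by
      intro h
      have hdd := orderOf_dvd_iff_pow_eq_one.2 h
      rw [htd] at hdd
      have := (Nat.pow_dvd_pow_iff_le_right hq.one_lt).1 hdd
      omega
    by_cases hcen : ∃ u ∈ center P, (σ ^ q ^ (t - 1)) u ≠ u
    · -- the central case: use Ω₁(Z(P))
      obtain ⟨a, r, h1, h2, h3⟩ := tail_lemma hp hq hpq hdvd hP σ hσ (center P)
        (fun u hu v _ => (Subgroup.mem_center_iff.1 hu v).symm)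
        (mem_center_iff_aut σ) ht1 hσt hcen
      exact ⟨a, r, h1, h2, by rw [h3, htd]⟩
    · push_neg at hcen
      by_cases hcross : ∀ x : P, ((σ ^ q ^ (t - 1)) x)⁻¹ * x ∈ center P
      · -- crossed homomorphism: contradiction
        exfalso
        apply hτne
        apply MulEquiv.ext
        intro x
        set τ := σ ^ q ^ (t - 1) with hτdef
        set c := (τ x)⁻¹ * x with hcdef
        have hcc : c ∈ center P := hcross x
        have hτc : τ c = c := hcen c hcc
        have hτx : τ x = x * c⁻¹ := by rw [hcdef]; group
        have key : ∀ m : ℕ, (τ ^ m) x = x * (c⁻¹) ^ m := by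
          intro m
          induction m with
          | zero => simp
          | succ m ihm =>
            rw [mulAut_pow_succ, ihm, map_mul, map_pow, map_inv, hτc, hτx, mul_assoc,
              ← pow_succ']
        have hτk : (τ ^ q ^ k) x = x := by
          rw [hτdef, ← pow_mul, mul_comm, pow_mul, hσ, one_pow]
          rfl
        have hck : (c⁻¹) ^ q ^ k = 1 := by
          have h5 := key (q ^ k)
          rw [hτk] at h5
          have : x * 1 = x * (c⁻¹) ^ q ^ k := by rw [mul_one]; exact h5
          exact (mul_left_cancel this).symm
        obtain ⟨m, hm⟩ := hP c⁻¹
        have hc1 : c⁻¹ = 1 := coprime_kill_pow hp hq hpq hm hck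
        rw [hτx, hc1, mul_one]
        rfl
      · push_neg at hcross
        obtain ⟨x0, hx0⟩ := hcross
        -- pass to the quotient by the center
        set Z := center P with hZdef
        set Q := P ⧸ Z with hQdef
        set σbar : MulAut Q := QuotientGroup.congr Z Z σ (center_map_aut σ) with hσbardef
        have hmk : ∀ x : P, σbar (QuotientGroup.mk x) = QuotientGroup.mk (σ x) :=
          fun x => QuotientGroup.congr_mk Z Z σ (center_map_aut σ) x
        have hmkpow : ∀ (m : ℕ) (x : P),
            (σbar ^ m) (QuotientGroup.mk x) = QuotientGroup.mk ((σ ^ m) x) := by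
          intro m
          induction m with
          | zero => intro x; rfl
          | succ m ihm =>
            intro x
            rw [mulAut_pow_succ, ihm, hmk, mulAut_pow_succ]
        have hpowQ : ∀ (m : ℕ), σ ^ m = 1 → σbar ^ m = 1 := by
          intro m hm
          apply MulEquiv.ext
          intro y
          obtain ⟨x, rfl⟩ := QuotientGroup.mk_surjective y
          rw [hmkpow, hm]
          rfl
        have hσbark : σbar ^ q ^ k = 1 := hpowQ _ hσ
        have hσbart : σbar ^ q ^ t = 1 := hpowQ _ hσt
        have hQp : IsPGroup p Q := hP.to_quotient Z
        have hne0 : (QuotientGroup.mk (((σ ^ q ^ (t-1)) x0)) : Q) ≠ QuotientGroup.mk x0 := by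
          intro h
          exact hx0 ((QuotientGroup.eq).1 h)
        haveI hQnt : Nontrivial Q := ⟨_, _, hne0⟩
        haveI : Nontrivial ↥Z := hP.center_nontrivial
        have hZ2 : 2 ≤ Nat.card ↥Z := Finite.one_lt_card
        have hcardeq : Nat.card P = Nat.card Q * Nat.card ↥Z :=
          Subgroup.card_eq_card_quotient_mul_card_subgroup Z
        have hQpos : 1 ≤ Nat.card Q := Nat.card_pos
        have hcardQ : Nat.card Q ≤ n := by
          have h6 : Nat.card Q * 2 ≤ Nat.card Q * Nat.card ↥Z :=
            Nat.mul_le_mul_left _ hZ2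
          omega
        -- recurse
        obtain ⟨abar, r, habar, habareq, hr⟩ := ih Q hcardQ hQp hQnt σbar hσbark
        have hσbare : σbar ^ q ^ (t - 1) ≠ 1 := by
          intro h
          apply hne0
          have := MulEquiv.ext_iff.1 h (QuotientGroup.mk x0)
          rw [hmkpow] at this
          exact this
        have hordσbar : orderOf σbar = q ^ t := order_eq_prime_pow hq hσbart hσbare
        rw [hordσbar] at hr
        -- r is invertible mod p
        have hrne : ((r : ZMod p)) ≠ 0 := by
          intro h0
          rw [h0] at hr
          have : orderOf (0 : ZMod p) = 0 := by
            rw [orderOf_eq_zero_iff]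
            intro hfin
            obtain ⟨m', hm', h0'⟩ := hfin.exists_pow_eq_one
            rw [zero_pow hm'.ne'] at h0'
            exact zero_ne_one h0'
          rw [this] at hr
          exact (pow_ne_zero t hq.pos.ne') hr.symm
        obtain ⟨x, hx⟩ := QuotientGroup.mk_surjective abar
        -- powers of abar under σbar
        have habarpow : ∀ m : ℕ, (σbar ^ m) abar = abar ^ (r ^ m) := by
          intro m
          induction m with
          | zero => simp
          | succ m ihm =>
            rw [mulAut_pow_succ, ihm, map_pow, habareq, ← pow_mul, ← pow_succ']
        -- key : zpowers (abar ^ r) = zpowers abar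
        have hkey : Subgroup.zpowers (abar ^ r) = Subgroup.zpowers abar := by
          apply le_antisymm
          · rw [Subgroup.zpowers_le]
            exact Subgroup.pow_mem _ (Subgroup.mem_zpowers abar) r
          · rw [Subgroup.zpowers_le, Subgroup.mem_zpowers_iff]
            refine ⟨((((r : ZMod p)⁻¹).val : ℕ) : ℤ), ?_⟩
            rw [zpow_natCast, ← pow_mul]
            have hmod : (r * ((r : ZMod p)⁻¹).val) ≡ 1 [MOD p] := by
              rw [← ZMod.natCast_eq_natCast_iff]
              push_cast
              rw [ZMod.natCast_rightInverse]
              rw [mul_inv_cancel₀ hrne]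
            have h11 : abar ^ (r * ((r : ZMod p)⁻¹).val) = abar ^ 1 := by
              rw [pow_eq_pow_iff_modEq, habar]
              exact hmod
            rw [h11, pow_one]
        have hzmem : ∀ w : Q, w ∈ Subgroup.zpowers abar ↔ σbar w ∈ Subgroup.zpowers abar := by
          intro w
          constructor
          · intro hw
            rw [Subgroup.mem_zpowers_iff] at hw
            obtain ⟨i, hi⟩ := hw
            have h12 : σbar w = (abar ^ r) ^ i := by
              rw [← hi, ← habareq, ← map_zpow]
            rw [h12, ← hkey]
            exact Subgroup.zpow_mem _ (Subgroup.mem_zpowers _) i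
          · intro hw
            rw [← hkey, Subgroup.mem_zpowers_iff] at hw
            obtain ⟨i, hi⟩ := hw
            have h13 : σbar (abar ^ i) = σbar w := by
              rw [map_zpow, habareq]
              exact hi
            have h14 := σbar.injective h13
            rw [← h14]
            exact Subgroup.zpow_mem _ (Subgroup.mem_zpowers _) i
        set B : Subgroup P := Subgroup.comap (QuotientGroup.mk' Z) (Subgroup.zpowers abar)
          with hBdef
        have hmemB : ∀ g : P, g ∈ B ↔ (QuotientGroup.mk g : Q) ∈ Subgroup.zpowers abar :=
          fun g => Iff.rfl
        have hBc : ∀ u ∈ B, ∀ v ∈ B, u * v = v * u := by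
          intro u hu v hv
          rw [hmemB, Subgroup.mem_zpowers_iff] at hu hv
          obtain ⟨i, hi⟩ := hu
          obtain ⟨j, hj⟩ := hv
          rw [← hx] at hi hj
          have hiz : (x ^ i)⁻¹ * u ∈ Z := by
            rw [← QuotientGroup.eq, QuotientGroup.mk_zpow]
            exact hi
          have hjz : (x ^ j)⁻¹ * v ∈ Z := by
            rw [← QuotientGroup.eq, QuotientGroup.mk_zpow]
            exact hj
          have hu' : u = x ^ i * ((x ^ i)⁻¹ * u) := by group
          have hv' : v = x ^ j * ((x ^ j)⁻¹ * v) := by group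
          rw [hu', hv']
          exact comm_center_aux hiz hjz i j
        have hBinv : ∀ g : P, g ∈ B ↔ σ g ∈ B := by
          intro g
          rw [hmemB, hmemB]
          have : (QuotientGroup.mk (σ g) : Q) = σbar (QuotientGroup.mk g) := (hmk g).symm
          rw [this]
          exact hzmem _
        have hwitness : ∃ u ∈ B, (σ ^ q ^ (t - 1)) u ≠ u := by
          refine ⟨x, ?_, ?_⟩
          · rw [hmemB, hx]
            exact Subgroup.mem_zpowers abar
          · intro h
            have h7 : (σbar ^ q ^ (t-1)) abar = abar := by
              rw [← hx, hmkpow, h]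
            rw [habarpow] at h7
            have h8 : abar ^ (r ^ q ^ (t-1)) = abar ^ 1 := by rw [h7, pow_one]
            rw [pow_eq_pow_iff_modEq, habar, ← ZMod.natCast_eq_natCast_iff] at h8
            push_cast at h8
            have h9 : ((r : ZMod p)) ^ q ^ (t-1) = 1 := h8
            have h10 := orderOf_dvd_iff_pow_eq_one.2 h9
            rw [hr] at h10
            have := (Nat.pow_dvd_pow_iff_le_right hq.one_lt).1 h10
            omega
        obtain ⟨a, r2, ha1, ha2, ha3⟩ :=
          tail_lemma hp hq hpq hdvd hP σ hσ B hBc hBinv ht1 hσt hwitness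
        exact ⟨a, r2, ha1, ha2, by rw [ha3, htd]⟩
lemma zpowers_pow_eq_self {G : Type*} [Group G] {p r : ℕ} (hp : p.Prime) {a : G}
    (ha : orderOf a = p) (hrne : ((r : ZMod p)) ≠ 0) :
    Subgroup.zpowers (a ^ r) = Subgroup.zpowers a := by
  haveI : Fact p.Prime := ⟨hp⟩
  apply le_antisymm
  · rw [Subgroup.zpowers_le]
    exact Subgroup.pow_mem _ (Subgroup.mem_zpowers a) r
  · rw [Subgroup.zpowers_le, Subgroup.mem_zpowers_iff]
    refine ⟨((((r : ZMod p)⁻¹).val : ℕ) : ℤ), ?_⟩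
    rw [zpow_natCast, ← pow_mul]
    have hmod : (r * ((r : ZMod p)⁻¹).val) ≡ 1 [MOD p] := by
      rw [← ZMod.natCast_eq_natCast_iff]
      push_cast
      rw [ZMod.natCast_rightInverse]
      rw [mul_inv_cancel₀ hrne]
    have h11 : a ^ (r * ((r : ZMod p)⁻¹).val) = a ^ 1 := by
      rw [pow_eq_pow_iff_modEq, ha]
      exact hmod
    rw [h11, pow_one]

lemma mem_normalizer_of_conj_pow {G : Type*} [Group G] {p r : ℕ} (hp : p.Prime) {a b : G}
    (ha : orderOf a = p) (hrne : ((r : ZMod p)) ≠ 0) (hconj : b * a * b⁻¹ = a ^ r) :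
    b ∈ Subgroup.normalizer (Subgroup.zpowers a : Set G) := by
  rw [Subgroup.mem_normalizer_iff]
  intro h
  have hφa : (MulAut.conj b) a = a ^ r := by rw [MulAut.conj_apply]; exact hconj
  have key : ∀ w : G, w ∈ Subgroup.zpowers a ↔ (MulAut.conj b) w ∈ Subgroup.zpowers a := by
    intro w
    constructor
    · intro hw
      rw [Subgroup.mem_zpowers_iff] at hw
      obtain ⟨i, hi⟩ := hw
      have h12 : (MulAut.conj b) w = (a ^ r) ^ i := by
        rw [← hi, ← hφa, ← map_zpow]
      rw [h12, ← zpowers_pow_eq_self hp ha hrne]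
      exact Subgroup.zpow_mem _ (Subgroup.mem_zpowers _) i
    · intro hw
      rw [← zpowers_pow_eq_self hp ha hrne, Subgroup.mem_zpowers_iff] at hw
      obtain ⟨i, hi⟩ := hw
      have h13 : (MulAut.conj b) (a ^ i) = (MulAut.conj b) w := by
        rw [map_zpow, hφa]
        exact hi
      have h14 := (MulAut.conj b).injective h13
      rw [← h14]
      exact Subgroup.zpow_mem _ (Subgroup.mem_zpowers _) i
  have h15 := key h
  rw [MulAut.conj_apply] at h15
  exact h15

/-- Let `G` be finite solvable, `F` its Fitting subgroup, assumed to be a nontrivial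
`p`-group, `q ≠ p` a prime with `q^k ∣ p - 1`, and `b ∈ G` of order `q^k`. Then either
`b` centralizes `F`, or `G` has a subgroup `⟨a⟩ ⋊ ⟨b⟩ ≅ C_p ⋊ C_{q^k}` with `a ∈ F` of
order `p`; moreover if `b` acts on `F` as an automorphism of order `q^k`, then `a` can
be chosen so that `b` acts faithfully (Frobenius) on `⟨a⟩`. -/
theorem stmt12 (p q k : ℕ) (hp : p.Prime) (hq : q.Prime) (hpq : p ≠ q) (hk : 0 < k)
    (hdvd : q ^ k ∣ p - 1)
    (G : Type*) [Group G] [Finite G] [Group.IsSolvable G]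
    (F : Subgroup G) [F.Normal] (hFnil : Group.IsNilpotent F)
    (hFitting : ∀ N : Subgroup G, N.Normal → Group.IsNilpotent N → N ≤ F)
    (hFp : IsPGroup p F) (hFne : F ≠ ⊥)
    (b : G) (hb : orderOf b = q ^ k) :
    ((∀ x ∈ F, Commute b x) ∨
      ∃ a ∈ F, orderOf a = p ∧ b ∈ Subgroup.normalizer (Subgroup.zpowers a : Set G)) ∧
    ((∀ j : ℕ, (∀ x ∈ F, b ^ j * x * (b ^ j)⁻¹ = x) ↔ q ^ k ∣ j) →
      ∃ a ∈ F, orderOf a = p ∧ b ∈ Subgroup.normalizer (Subgroup.zpowers a : Set G) ∧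
        ∀ j : ℕ, (b ^ j * a * (b ^ j)⁻¹ = a ↔ q ^ k ∣ j)) := by
  haveI : Fact p.Prime := ⟨hp⟩
  haveI : Nontrivial ↥F := (Subgroup.nontrivial_iff_ne_bot F).2 hFne
  set σ : MulAut ↥F := MulAut.conjNormal b with hσdef
  have hbqk : b ^ q ^ k = 1 := by rw [← hb]; exact pow_orderOf_eq_one b
  have hσpow : ∀ j : ℕ, σ ^ j = MulAut.conjNormal (b ^ j) := by
    intro j
    rw [hσdef, ← map_pow]
  have hσk : σ ^ q ^ k = 1 := by
    rw [hσpow, hbqk, map_one]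
  have hσorddvd : orderOf σ ∣ q ^ k := orderOf_dvd_iff_pow_eq_one.2 hσk
  have hσpos : 0 < orderOf σ :=
    orderOf_pos_iff.2 (isOfFinOrder_iff_pow_eq_one.2
      ⟨q ^ k, pow_pos hq.pos k, hσk⟩)
  obtain ⟨a0, r, ha0p, ha0eq, ha0r⟩ :=
    L3 hp hq hpq hdvd (Nat.card ↥F) ↥F le_rfl hFp inferInstance σ hσk
  have haF : (a0 : G) ∈ F := a0.2
  have hap : orderOf (a0 : G) = p := by
    rw [← ha0p]
    exact orderOf_injective F.subtype F.subtype_injective a0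
  have hconj : b * (a0 : G) * b⁻¹ = (a0 : G) ^ r := by
    have h1 := congrArg Subtype.val ha0eq
    rw [hσdef] at h1
    simpa using h1
  have hrne : ((r : ZMod p)) ≠ 0 := by
    intro h0
    rw [h0] at ha0r
    have h2 : orderOf (0 : ZMod p) = 0 := by
      rw [orderOf_eq_zero_iff]
      intro hfin
      obtain ⟨m', hm', h0'⟩ := hfin.exists_pow_eq_one
      rw [zero_pow hm'.ne'] at h0'
      exact zero_ne_one h0'
    rw [h2] at ha0r
    omega
  have hnorm : b ∈ Subgroup.normalizer (Subgroup.zpowers (a0 : G) : Set G) :=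
    mem_normalizer_of_conj_pow hp hap hrne hconj
  constructor
  · by_cases hc : ∀ x ∈ F, Commute b x
    · exact Or.inl hc
    · exact Or.inr ⟨(a0 : G), haF, hap, hnorm⟩
  · intro hord
    have hiff : ∀ j : ℕ, σ ^ j = 1 ↔ (∀ x ∈ F, b ^ j * x * (b ^ j)⁻¹ = x) := by
      intro j
      constructor
      · intro h1 x hx
        have h2 : (σ ^ j) ⟨x, hx⟩ = ⟨x, hx⟩ := by rw [h1]; rfl
        have h3 := congrArg Subtype.val h2
        rw [hσpow, MulAut.conjNormal_apply] at h3
        exact h3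
      · intro h1
        apply MulEquiv.ext
        intro y
        apply Subtype.ext
        show ((σ ^ j) y : G) = (y : G)
        rw [hσpow]
        rw [MulAut.conjNormal_apply]
        exact h1 y y.2
    have hordσ : orderOf σ = q ^ k := by
      apply Nat.dvd_antisymm hσorddvd
      exact (hord (orderOf σ)).1 ((hiff _).1 (pow_orderOf_eq_one σ))
    rw [hordσ] at ha0r
    have hconjj : ∀ j : ℕ, b ^ j * (a0 : G) * (b ^ j)⁻¹ = (a0 : G) ^ (r ^ j) := by
      intro j
      induction j with
      | zero => simp
      | succ j ihj =>
        have hstep : b ^ (j+1) * (a0 : G) * (b ^ (j+1))⁻¹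
            = b * (b ^ j * (a0 : G) * (b ^ j)⁻¹) * b⁻¹ := by
          rw [pow_succ']
          group
        rw [hstep, ihj, ← conj_pow, hconj, ← pow_mul, ← pow_succ']
    refine ⟨(a0 : G), haF, hap, hnorm, ?_⟩
    intro j
    rw [hconjj j]
    constructor
    · intro h
      have h8 : (a0 : G) ^ (r ^ j) = (a0 : G) ^ 1 := by rw [h, pow_one]
      rw [pow_eq_pow_iff_modEq, hap, ← ZMod.natCast_eq_natCast_iff] at h8
      push_cast at h8
      have h9 := orderOf_dvd_iff_pow_eq_one.2 h8
      rwa [ha0r] at h9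
    · intro h
      have h8 : ((r : ZMod p)) ^ j = 1 := by
        apply orderOf_dvd_iff_pow_eq_one.1
        rw [ha0r]
        exact h
      have h9 : (r ^ j : ℕ) ≡ 1 [MOD p] := by
        rw [← ZMod.natCast_eq_natCast_iff]
        push_cast
        exact h8
      have h10 : (a0 : G) ^ (r ^ j) = (a0 : G) ^ 1 := by
        rw [pow_eq_pow_iff_modEq, hap]
        exact h9
      rw [h10, pow_one]
end
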